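/- arXiv:2209.07860 — 4 statements merged into one kernel-verified Lean document; each statement's English description precedes it below -/
import Mathlib

section
/- Let (G, L, c, r, e_r) be a rooted WRAP instance, F⃗ a non-shortenable directed WRAP solution, and K ⊆ L. Then a directed link (u, v) ∈ F⃗ is contained in Drop_{F⃗}(K) if and only if v is connected to a v-good vertex in the link intersection graph H[K]. -/
/-!
Common definitions for the Weighted Ring Augmentation Problem (WRAP).

A rooted WRAP instance `(G, L, c, r, e_r)` has a ring graph `G` whose
vertices we identify with `Fin n`, numbered `r = 0, 1, …, n-1` in the order
in which they appear along the path `(V, E \ {e_r})` starting at the root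
`r = 0`.  Vertex `i` is to the left of `j` iff `i < j`.
-/

/-- An undirected link: an unordered pair of distinct vertices of the ring,
recorded via its left endpoint `lo` and its right endpoint `hi`. -/
structure Link (n : ℕ) where
  lo : Fin n
  hi : Fin n
  lo_lt_hi : lo < hi

instance {n : ℕ} : DecidableEq (Link n) := fun a b =>
  decidable_of_iff (a.lo = b.lo ∧ a.hi = b.hi) (by cases a; cases b; simp)

/-- A directed link: an ordered pair of distinct vertices. -/
structure DLink (n : ℕ) where
  tail : Fin n
  head : Fin n
  ne : tail ≠ head

instance {n : ℕ} : DecidableEq (DLink n) := fun a b =>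
  decidable_of_iff (a.tail = b.tail ∧ a.head = b.head) (by cases a; cases b; simp)

variable {n : ℕ}

/-- The underlying undirected link of a directed link. -/
def DLink.toLink (d : DLink n) : Link n :=
  ⟨min d.tail d.head, max d.tail d.head, min_lt_max.mpr d.ne⟩

/-- `ℓ` is incident to `v`. -/
def Link.Incident (ℓ : Link n) (v : Fin n) : Prop := ℓ.lo = v ∨ ℓ.hi = v

/-- The 2-cuts `C_G` of the ring: the nonempty intervals of consecutive
vertices along the path `(V, E \ {e_r})` that do not contain the root `0`. -/
def IsCut [NeZero n] (C : Finset (Fin n)) : Prop :=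
  ∃ a b : Fin n, 0 < a ∧ a ≤ b ∧ C = Finset.Icc a b

/-- `ℓ` has exactly one endpoint in `C`. -/
def crossesCut (ℓ : Link n) (C : Finset (Fin n)) : Prop :=
  (ℓ.lo ∈ C ∧ ℓ.hi ∉ C) ∨ (ℓ.lo ∉ C ∧ ℓ.hi ∈ C)

instance (ℓ : Link n) (C : Finset (Fin n)) : Decidable (crossesCut ℓ C) := by
  unfold crossesCut; infer_instance

/-- `δ_K(C)`: the links of `K` with exactly one endpoint in `C`. -/
def cutLinks (K : Finset (Link n)) (C : Finset (Fin n)) : Finset (Link n) :=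
  K.filter (fun ℓ => crossesCut ℓ C)

/-- An (undirected) WRAP solution: every 2-cut is covered by some link. -/
def IsSolution [NeZero n] (S : Finset (Link n)) : Prop :=
  ∀ C : Finset (Fin n), IsCut C → (cutLinks S C).Nonempty

/-- A directed link covers a 2-cut if it enters it. -/
def DCovers (d : DLink n) (C : Finset (Fin n)) : Prop := d.tail ∉ C ∧ d.head ∈ C

/-- A directed WRAP solution: every 2-cut is entered by some directed link. -/
def IsDirSolution [NeZero n] (F : Finset (DLink n)) : Prop :=
  ∀ C : Finset (Fin n), IsCut C → ∃ d ∈ F, DCovers d C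

/-- `d'` is a shortening of `d`: same head, and the tail of `d'` lies on the
unique path between the endpoints of `d` in `(V, E \ {e_r})`. -/
def IsShortening (d' d : DLink n) : Prop :=
  d'.head = d.head ∧ min d.tail d.head ≤ d'.tail ∧ d'.tail ≤ max d.tail d.head

/-- A non-shortenable directed WRAP solution: deleting any link, or replacing
any link by a strict shortening of it, destroys feasibility. -/
def NonShortenable [NeZero n] (F : Finset (DLink n)) : Prop :=
  IsDirSolution F ∧
    (∀ d ∈ F, ¬ IsDirSolution (F.erase d)) ∧
    (∀ d ∈ F, ∀ d' : DLink n, IsShortening d' d → d' ≠ d →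
      ¬ IsDirSolution (insert d' (F.erase d)))

/-- `d` is a shadow of the undirected link `ℓ`: a shortening of one of the two
orientations of `ℓ`. -/
def IsShadow (d : DLink n) (ℓ : Link n) : Prop :=
  (d.head = ℓ.lo ∨ d.head = ℓ.hi) ∧ ℓ.lo ≤ d.tail ∧ d.tail ≤ ℓ.hi

/-- `u` is a descendant of `v` in `(V, F)` (every vertex is a descendant of
itself). -/
def Descend (F : Finset (DLink n)) (v u : Fin n) : Prop :=
  Relation.ReflTransGen (fun a b => ∃ d ∈ F, d.tail = a ∧ d.head = b) v u

/-- `u` is `v`-good: not a descendant of `v` in `(V, F)`. -/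
def VGood (F : Finset (DLink n)) (v u : Fin n) : Prop := ¬ Descend F v u

/-- `w` is the least common ancestor of the vertex set `U` in `(V, F)`. -/
def IsLCA (F : Finset (DLink n)) (w : Fin n) (U : Set (Fin n)) : Prop :=
  (∀ u ∈ U, Descend F w u) ∧ ∀ x : Fin n, (∀ u ∈ U, Descend F x u) → Descend F x w

/-- `d = (u,v)` is responsible for the 2-cut `C`: it covers `C` and no
directed link of `F` on the `r`–`u` path in the arborescence `(V, F)`
(i.e. no link of `F` whose head is an ancestor of `u`) covers `C`. -/
def Responsible [NeZero n] (F : Finset (DLink n)) (d : DLink n)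
    (C : Finset (Fin n)) : Prop :=
  IsCut C ∧ DCovers d C ∧
    ∀ d' ∈ F, Descend F d'.head d.tail → ¬ DCovers d' C

/-- `Drop_F(K)`: directed links of `F` all of whose responsible cuts
are covered by `K`. -/
def Drop [NeZero n] (F : Finset (DLink n)) (K : Finset (Link n)) : Set (DLink n) :=
  {d | d ∈ F ∧ ∀ C : Finset (Fin n), Responsible F d C → (cutLinks K C).Nonempty}

/-- Two links are crossing: their endpoints interleave along the ring. -/
def Crossing (ℓ f : Link n) : Prop :=
  (ℓ.lo < f.lo ∧ f.lo < ℓ.hi ∧ ℓ.hi < f.hi) ∨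
  (f.lo < ℓ.lo ∧ ℓ.lo < f.hi ∧ f.hi < ℓ.hi)

/-- Two links intersect: they share an endpoint or cross. -/
def Intersects (ℓ f : Link n) : Prop :=
  (ℓ.lo = f.lo ∨ ℓ.lo = f.hi ∨ ℓ.hi = f.lo ∨ ℓ.hi = f.hi) ∨ Crossing ℓ f

/-- The vertex `u` is connected to the vertex `w` in the link intersection
graph `H[K]`: there is a path in `H[K]` from a link incident to `u` to a link
incident to `w`. -/
def ConnVert (K : Finset (Link n)) (u w : Fin n) : Prop :=
  ∃ ℓ ∈ K, ∃ f ∈ K, ℓ.Incident u ∧ f.Incident w ∧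
    Relation.ReflTransGen (fun a b => a ∈ K ∧ b ∈ K ∧ Intersects a b) ℓ f

/-- The link intersection graph `H[S]` is connected. -/
def ConnLinkSet (S : Finset (Link n)) : Prop :=
  ∀ ℓ ∈ S, ∀ f ∈ S,
    Relation.ReflTransGen (fun a b => a ∈ S ∧ b ∈ S ∧ Intersects a b) ℓ f

/-- `V(S)`: the vertices incident to a link of `S`. -/
def linkVerts (S : Finset (Link n)) : Set (Fin n) := {v | ∃ ℓ ∈ S, ℓ.Incident v}

/-- A festoon order: the links (listed as `f 0, f 1, …`) form a path in the
link intersection graph visited in this order, with both left endpoints and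
right endpoints strictly increasing. -/
def IsFestoonSeq {p : ℕ} (f : Fin p → Link n) : Prop :=
  (∀ i j : Fin p, i < j → (f i).lo < (f j).lo ∧ (f i).hi < (f j).hi) ∧
  (∀ i j : Fin p, (i : ℕ) + 1 = (j : ℕ) → Intersects (f i) (f j)) ∧
  (∀ i j : Fin p, (i : ℕ) + 1 < (j : ℕ) → ¬ Intersects (f i) (f j))

/-- A festoon: a nonempty link set admitting a festoon order. -/
def IsFestoon (X : Finset (Link n)) : Prop :=
  ∃ p : ℕ, 0 < p ∧ ∃ f : Fin p → Link n,
    IsFestoonSeq f ∧ X = Finset.image f Finset.univ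

/-- The festoon interval `I_X`: the interval from the leftmost endpoint of a
link of `X` to the rightmost endpoint of a link of `X`. -/
def festoonIval (X : Finset (Link n)) : Set (Fin n) :=
  {w | (∃ ℓ ∈ X, ℓ.lo ≤ w) ∧ ∃ ℓ ∈ X, w ≤ ℓ.hi}

/-- Two festoons are tangled: some link of one intersects some link of the
other. -/
def Tangled (X Y : Finset (Link n)) : Prop :=
  ∃ ℓ ∈ X, ∃ f ∈ Y, Intersects ℓ f

/-- A laminar family of vertex sets: any two members are nested or disjoint. -/
def Laminar (𝓛 : Set (Finset (Fin n))) : Prop :=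
  ∀ A ∈ 𝓛, ∀ B ∈ 𝓛, A ⊆ B ∨ B ⊆ A ∨ Disjoint A B

/-- An inclusion-wise maximal laminar subfamily of `C_G`. -/
def MaxLaminarCuts [NeZero n] (𝓛 : Set (Finset (Fin n))) : Prop :=
  (∀ C ∈ 𝓛, IsCut C) ∧ Laminar 𝓛 ∧
    ∀ C : Finset (Fin n), IsCut C → C ∉ 𝓛 → ¬ Laminar (insert C 𝓛)

/-- An `α`-thin link set. -/
def IsThin [NeZero n] (α : ℕ) (K : Finset (Link n)) : Prop :=
  ∃ 𝓛 : Set (Finset (Fin n)), MaxLaminarCuts 𝓛 ∧ ∀ C ∈ 𝓛, (cutLinks K C).card ≤ α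

/-- The set `𝒳` of festoons connects `v` to a `v`-good vertex. -/
def ConnectsToGood (F : Finset (DLink n)) (v : Fin n)
    (𝒳 : Finset (Finset (Link n))) : Prop :=
  ∃ w : Fin n, VGood F v w ∧ ConnVert (𝒳.biUnion id) v w

/-- The undirected graph obtained from a set of directed links by
disregarding orientations. -/
def undirGraph (F : Finset (DLink n)) : SimpleGraph (Fin n) where
  Adj a b := ∃ d ∈ F, (d.tail = a ∧ d.head = b) ∨ (d.tail = b ∧ d.head = a)
  symm := by
    constructor
    rintro a b ⟨d, hd, h⟩
    exact ⟨d, hd, h.symm⟩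
  loopless := by
    constructor
    rintro a ⟨d, hd, h⟩
    rcases h with ⟨h1, h2⟩ | ⟨h1, h2⟩ <;> exact d.ne (h1.trans h2.symm)

/-- A directed link going to the left along the ring. -/
def LeftGoing (d : DLink n) : Prop := d.head < d.tail

/-- A directed link going to the right along the ring. -/
def RightGoing (d : DLink n) : Prop := d.tail < d.head

section WrapProof

open Finset Relation

variable {n : ℕ}

private lemma memIcc {a b x : Fin (n+3)} :
    x ∈ Finset.Icc a b ↔ (a:ℕ) ≤ (x:ℕ) ∧ (x:ℕ) ≤ (b:ℕ) := by
  rw [Finset.mem_Icc, Fin.le_def, Fin.le_def]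

private lemma cut_not_zero {C : Finset (Fin (n+3))} (h : IsCut C) : (0 : Fin (n+3)) ∉ C := by
  obtain ⟨a, b, ha, hab, rfl⟩ := h
  have ha' : 0 < (a:ℕ) := by have h := Fin.lt_def.1 ha; simp only [Fin.val_zero] at h; exact h
  rw [memIcc]; omega

private lemma descend_iff {F : Finset (DLink (n+3))} {a b : Fin (n+3)} :
    Descend F a b ↔ Relation.ReflTransGen (fun x y => ∃ d ∈ F, d.tail = x ∧ d.head = y) a b :=
  Iff.rfl

private lemma descend_step {F : Finset (DLink (n+3))} {e : DLink (n+3)} (he : e ∈ F) :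
    Descend F e.tail e.head :=
  Relation.ReflTransGen.single ⟨e, he, rfl, rfl⟩

private lemma descend_trans {F : Finset (DLink (n+3))} {a b c : Fin (n+3)}
    (h1 : Descend F a b) (h2 : Descend F b c) : Descend F a c :=
  Relation.ReflTransGen.trans h1 h2

private lemma entry {F : Finset (DLink (n+3))} (P : Fin (n+3) → Prop) {s w : Fin (n+3)}
    (h : Descend F s w) (hs : ¬ P s) (hw : P w) :
    ∃ g ∈ F, ¬ P g.tail ∧ P g.head ∧ Descend F s g.tail ∧ Descend F g.head w := by
  rw [descend_iff] at h
  induction h with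
  | refl => exact absurd hw hs
  | @tail b c hab hbc ih =>
    by_cases hb : P b
    · obtain ⟨g, hg, q1, q2, q3, q4⟩ := ih hb
      exact ⟨g, hg, q1, q2, q3, Relation.ReflTransGen.tail q4 hbc⟩
    · obtain ⟨e, he, t1, t2⟩ := hbc
      refine ⟨e, he, ?_, ?_, ?_, ?_⟩
      · rw [t1]; exact hb
      · rw [t2]; exact hw
      · rw [t1]; exact hab
      · rw [t2]; exact Relation.ReflTransGen.refl

private lemma dlink_ext {e1 e2 : DLink (n+3)} (ht : e1.tail = e2.tail)
    (hh : e1.head = e2.head) : e1 = e2 := by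
  cases e1; cases e2; simp_all

private lemma head_ne_zero {F : Finset (DLink (n+3))} (hF : NonShortenable F)
    {e : DLink (n+3)} (he : e ∈ F) : e.head ≠ 0 := by
  intro h0
  apply hF.2.1 e he
  intro C hC
  obtain ⟨g, hg, hgc⟩ := hF.1 C hC
  refine ⟨g, Finset.mem_erase.2 ⟨?_, hg⟩, hgc⟩
  rintro rfl
  exact cut_not_zero hC (h0 ▸ hgc.2)

private lemma exists_head {F : Finset (DLink (n+3))} (hF : NonShortenable F)
    {v : Fin (n+3)} (hv : v ≠ 0) : ∃ e ∈ F, e.head = v := by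
  have hpos : 0 < v := Fin.pos_of_ne_zero hv
  obtain ⟨e, he, hcov⟩ := hF.1 (Finset.Icc v v) ⟨v, v, hpos, le_refl v, rfl⟩
  refine ⟨e, he, ?_⟩
  have := memIcc.1 hcov.2
  exact Fin.ext (by omega)

private lemma key_shorten {F : Finset (DLink (n+3))} (hF : NonShortenable F)
    {g : DLink (n+3)} (hg : g ∈ F) (t : Fin (n+3)) (ht1 : t ≠ g.head) (ht2 : t ≠ g.tail)
    (h3 : min g.tail g.head ≤ t) (h4 : t ≤ max g.tail g.head) :
    ∃ C, IsCut C ∧ DCovers g C ∧ t ∈ C ∧ ∀ g' ∈ F, DCovers g' C → g' = g := by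
  have hshort : IsShortening ⟨t, g.head, ht1⟩ g := ⟨rfl, h3, h4⟩
  have hne : (⟨t, g.head, ht1⟩ : DLink (n+3)) ≠ g := fun h => ht2 (congrArg DLink.tail h)
  have hns := hF.2.2 g hg _ hshort hne
  rw [IsDirSolution] at hns; push_neg at hns
  obtain ⟨C, hC, hnc⟩ := hns
  obtain ⟨g'', hg'', hcov⟩ := hF.1 C hC
  have hgg : g'' = g := by
    by_contra hne'
    exact hnc g'' (Finset.mem_insert_of_mem (Finset.mem_erase.2 ⟨hne', hg''⟩)) hcov
  rw [hgg] at hcov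
  refine ⟨C, hC, hcov, ?_, ?_⟩
  · by_contra htC
    exact hnc ⟨t, g.head, ht1⟩ (Finset.mem_insert_self _ _) ⟨htC, hcov.2⟩
  · intro g' hg' hcov'
    by_contra hne'
    exact hnc g' (Finset.mem_insert_of_mem (Finset.mem_erase.2 ⟨hne', hg'⟩)) hcov'

private lemma sole_cut_right {F : Finset (DLink (n+3))} (hF : NonShortenable F)
    {e : DLink (n+3)} (he : e ∈ F) (hlt : e.head < e.tail) :
    ∃ a b : Fin (n+3), 0 < a ∧ a ≤ b ∧ (b:ℕ) + 1 = (e.tail:ℕ) ∧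
      DCovers e (Finset.Icc a b) ∧ ∀ g' ∈ F, DCovers g' (Finset.Icc a b) → g' = e := by
  have hlt' : (e.head:ℕ) < (e.tail:ℕ) := hlt
  by_cases hadj : (e.head:ℕ) + 1 = (e.tail:ℕ)
  · have hdel := hF.2.1 e he
    rw [IsDirSolution] at hdel; push_neg at hdel
    obtain ⟨C, hC, hnc⟩ := hdel
    obtain ⟨g, hg, hcov⟩ := hF.1 C hC
    have hge : g = e := by
      by_contra hne; exact hnc g (Finset.mem_erase.2 ⟨hne, hg⟩) hcov
    rw [hge] at hcov
    obtain ⟨a, b, ha0, hab, rfl⟩ := hC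
    refine ⟨a, b, ha0, hab, ?_, hcov, ?_⟩
    · have hh := memIcc.1 hcov.2
      have ht : ¬ ((a:ℕ) ≤ (e.tail:ℕ) ∧ (e.tail:ℕ) ≤ (b:ℕ)) := fun h => hcov.1 (memIcc.2 h)
      omega
    · intro g' hg' hcov'
      by_contra hne; exact hnc g' (Finset.mem_erase.2 ⟨hne, hg'⟩) hcov'
  · have htlt : (e.tail:ℕ) - 1 < n + 3 := by omega
    have t : Fin (n+3) := ⟨(e.tail:ℕ) - 1, htlt⟩
    have hval : ((⟨(e.tail:ℕ) - 1, htlt⟩ : Fin (n+3)):ℕ) = (e.tail:ℕ) - 1 := rfl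
    have ht1 : (⟨(e.tail:ℕ) - 1, htlt⟩ : Fin (n+3)) ≠ e.head := fun h => by
      rw [Fin.ext_iff, hval] at h; omega
    have ht2 : (⟨(e.tail:ℕ) - 1, htlt⟩ : Fin (n+3)) ≠ e.tail := fun h => by
      rw [Fin.ext_iff, hval] at h; omega
    have hmin : min e.tail e.head = e.head := min_eq_right hlt.le
    have hmax : max e.tail e.head = e.tail := max_eq_left hlt.le
    have h3 : min e.tail e.head ≤ (⟨(e.tail:ℕ) - 1, htlt⟩ : Fin (n+3)) := by
      rw [hmin, Fin.le_def, hval]; omega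
    have h4 : (⟨(e.tail:ℕ) - 1, htlt⟩ : Fin (n+3)) ≤ max e.tail e.head := by
      rw [hmax, Fin.le_def, hval]; omega
    obtain ⟨C, hC, hcov, htC, hsole⟩ := key_shorten hF he _ ht1 ht2 h3 h4
    obtain ⟨a, b, ha0, hab, rfl⟩ := hC
    have h1 := memIcc.1 hcov.2
    have h2 := memIcc.1 htC
    rw [hval] at h2
    have ht : ¬ ((a:ℕ) ≤ (e.tail:ℕ) ∧ (e.tail:ℕ) ≤ (b:ℕ)) := fun h => hcov.1 (memIcc.2 h)
    exact ⟨a, b, ha0, hab, by omega, hcov, hsole⟩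

private lemma sole_cut_left {F : Finset (DLink (n+3))} (hF : NonShortenable F)
    {e : DLink (n+3)} (he : e ∈ F) (hlt : e.tail < e.head) :
    ∃ a b : Fin (n+3), 0 < a ∧ a ≤ b ∧ (a:ℕ) = (e.tail:ℕ) + 1 ∧
      DCovers e (Finset.Icc a b) ∧ ∀ g' ∈ F, DCovers g' (Finset.Icc a b) → g' = e := by
  have hlt' : (e.tail:ℕ) < (e.head:ℕ) := hlt
  by_cases hadj : (e.tail:ℕ) + 1 = (e.head:ℕ)
  · have hdel := hF.2.1 e he
    rw [IsDirSolution] at hdel; push_neg at hdel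
    obtain ⟨C, hC, hnc⟩ := hdel
    obtain ⟨g, hg, hcov⟩ := hF.1 C hC
    have hge : g = e := by
      by_contra hne; exact hnc g (Finset.mem_erase.2 ⟨hne, hg⟩) hcov
    rw [hge] at hcov
    obtain ⟨a, b, ha0, hab, rfl⟩ := hC
    refine ⟨a, b, ha0, hab, ?_, hcov, ?_⟩
    · have hh := memIcc.1 hcov.2
      have ht : ¬ ((a:ℕ) ≤ (e.tail:ℕ) ∧ (e.tail:ℕ) ≤ (b:ℕ)) := fun h => hcov.1 (memIcc.2 h)
      omega
    · intro g' hg' hcov'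
      by_contra hne; exact hnc g' (Finset.mem_erase.2 ⟨hne, hg'⟩) hcov'
  · have htlt : (e.tail:ℕ) + 1 < n + 3 := by omega
    have hval : ((⟨(e.tail:ℕ) + 1, htlt⟩ : Fin (n+3)):ℕ) = (e.tail:ℕ) + 1 := rfl
    have ht1 : (⟨(e.tail:ℕ) + 1, htlt⟩ : Fin (n+3)) ≠ e.head := fun h => by
      rw [Fin.ext_iff, hval] at h; omega
    have ht2 : (⟨(e.tail:ℕ) + 1, htlt⟩ : Fin (n+3)) ≠ e.tail := fun h => by
      rw [Fin.ext_iff, hval] at h; omega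
    have hmin : min e.tail e.head = e.tail := min_eq_left hlt.le
    have hmax : max e.tail e.head = e.head := max_eq_right hlt.le
    have h3 : min e.tail e.head ≤ (⟨(e.tail:ℕ) + 1, htlt⟩ : Fin (n+3)) := by
      rw [hmin, Fin.le_def, hval]; omega
    have h4 : (⟨(e.tail:ℕ) + 1, htlt⟩ : Fin (n+3)) ≤ max e.tail e.head := by
      rw [hmax, Fin.le_def, hval]; omega
    obtain ⟨C, hC, hcov, htC, hsole⟩ := key_shorten hF he _ ht1 ht2 h3 h4
    obtain ⟨a, b, ha0, hab, rfl⟩ := hC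
    have h1 := memIcc.1 hcov.2
    have h2 := memIcc.1 htC
    rw [hval] at h2
    have ht : ¬ ((a:ℕ) ≤ (e.tail:ℕ) ∧ (e.tail:ℕ) ≤ (b:ℕ)) := fun h => hcov.1 (memIcc.2 h)
    exact ⟨a, b, ha0, hab, by omega, hcov, hsole⟩

end WrapProof
section WrapProof2

open Finset Relation

variable {n : ℕ}

private lemma erase_contra {F : Finset (DLink (n+3))} (hF : NonShortenable F)
    {e1 e2 : DLink (n+3)} (h1 : e1 ∈ F) (h2 : e2 ∈ F) (hne : e1 ≠ e2)
    (hdom : ∀ C, IsCut C → DCovers e2 C → DCovers e1 C) : False := by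
  apply hF.2.1 e2 h2
  intro C hC
  obtain ⟨g, hg, hcov⟩ := hF.1 C hC
  by_cases hge : g = e2
  · exact ⟨e1, Finset.mem_erase.2 ⟨hne, h1⟩, hdom C hC (hge ▸ hcov)⟩
  · exact ⟨g, Finset.mem_erase.2 ⟨hge, hg⟩, hcov⟩

private lemma mid_contra {F : Finset (DLink (n+3))} (hF : NonShortenable F)
    {e1 e2 : DLink (n+3)} (h1 : e1 ∈ F) (h2 : e2 ∈ F)
    (hh : e1.head = e2.head) (o1 : e1.tail < e1.head) (o2 : e2.head < e2.tail) : False := by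
  obtain ⟨a2, b2, ha2p, hab2, ha2, hcov2, hsole2⟩ := sole_cut_left hF h1 o1
  obtain ⟨a1, b1, ha1p, hab1, hb1, hcov1, hsole1⟩ := sole_cut_right hF h2 o2
  have ho1 : (e1.tail:ℕ) < e1.head := o1
  have ho2 : (e2.head:ℕ) < e2.tail := o2
  have hhv : (e1.head:ℕ) = e2.head := congrArg Fin.val hh
  have hne : e1 ≠ e2 := fun h => by rw [h] at ho1; omega
  have hu2 : (a2:ℕ) ≤ e2.tail ∧ (e2.tail:ℕ) ≤ b2 := by
    by_contra hcon
    have hcg : DCovers e2 (Finset.Icc a2 b2) :=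
      ⟨fun hmem => hcon (memIcc.1 hmem), hh ▸ hcov2.2⟩
    exact hne (hsole2 e2 h2 hcg).symm
  have hu1 : (a1:ℕ) ≤ e1.tail ∧ (e1.tail:ℕ) ≤ b1 := by
    by_contra hcon
    have hcg : DCovers e1 (Finset.Icc a1 b1) :=
      ⟨fun hmem => hcon (memIcc.1 hmem), hh ▸ hcov1.2⟩
    exact hne (hsole1 e1 h1 hcg)
  have hw2 := memIcc.1 hcov2.2
  have hw1 := memIcc.1 hcov1.2
  have hcut3 : IsCut (Finset.Icc a1 b2) := ⟨a1, b2, ha1p, by rw [Fin.le_def]; omega, rfl⟩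
  obtain ⟨g, hg, hcovg⟩ := hF.1 _ hcut3
  have hgy := memIcc.1 hcovg.2
  have hgx : ¬ ((a1:ℕ) ≤ g.tail ∧ (g.tail:ℕ) ≤ b2) := fun h => hcovg.1 (memIcc.2 h)
  by_cases hycase : (g.head:ℕ) ≤ b1
  · have hcg : DCovers g (Finset.Icc a1 b1) := by
      constructor
      · intro hmem; have := memIcc.1 hmem; omega
      · exact memIcc.2 ⟨hgy.1, hycase⟩
    have hge := hsole1 g hg hcg
    rw [hge] at hgx
    omega
  · have hcg : DCovers g (Finset.Icc a2 b2) := by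
      constructor
      · intro hmem; have := memIcc.1 hmem; omega
      · exact memIcc.2 ⟨by omega, hgy.2⟩
    have hge := hsole2 g hg hcg
    rw [hge] at hgx
    omega

private lemma head_unique {F : Finset (DLink (n+3))} (hF : NonShortenable F)
    {e1 e2 : DLink (n+3)} (h1 : e1 ∈ F) (h2 : e2 ∈ F) (hh : e1.head = e2.head) : e1 = e2 := by
  by_contra hne
  have htne : (e1.tail:ℕ) ≠ e2.tail := fun h => hne (dlink_ext (Fin.ext h) hh)
  have hn1 : (e1.tail:ℕ) ≠ e1.head := fun h => e1.ne (Fin.ext h)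
  have hn2 : (e2.tail:ℕ) ≠ e2.head := fun h => e2.ne (Fin.ext h)
  have hhv : (e1.head:ℕ) = e2.head := congrArg Fin.val hh
  by_cases hc1 : (e1.tail:ℕ) < e1.head
  · by_cases hc2 : (e2.tail:ℕ) < e2.head
    · -- both tails left of head: link with larger tail dominated
      by_cases ht12 : (e1.tail:ℕ) < e2.tail
      · refine erase_contra hF h1 h2 hne ?_
        rintro C ⟨a, b, h0, hab, rfl⟩ hc
        have hx : ¬ ((a:ℕ) ≤ e2.tail ∧ (e2.tail:ℕ) ≤ b) := fun hm => hc.1 (memIcc.2 hm)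
        have hy := memIcc.1 hc.2
        refine ⟨fun hm => ?_, memIcc.2 (by omega)⟩
        have := memIcc.1 hm; omega
      · refine erase_contra hF h2 h1 (Ne.symm hne) ?_
        rintro C ⟨a, b, h0, hab, rfl⟩ hc
        have hx : ¬ ((a:ℕ) ≤ e1.tail ∧ (e1.tail:ℕ) ≤ b) := fun hm => hc.1 (memIcc.2 hm)
        have hy := memIcc.1 hc.2
        refine ⟨fun hm => ?_, memIcc.2 (by omega)⟩
        have := memIcc.1 hm; omega
    · exact mid_contra hF h1 h2 hh (Fin.lt_def.2 hc1) (Fin.lt_def.2 (by omega))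
  · by_cases hc2 : (e2.tail:ℕ) < e2.head
    · exact mid_contra hF h2 h1 hh.symm (Fin.lt_def.2 hc2) (Fin.lt_def.2 (by omega))
    · -- both tails right of head: link with smaller tail dominated
      by_cases ht12 : (e1.tail:ℕ) < e2.tail
      · refine erase_contra hF h2 h1 (Ne.symm hne) ?_
        rintro C ⟨a, b, h0, hab, rfl⟩ hc
        have hx : ¬ ((a:ℕ) ≤ e1.tail ∧ (e1.tail:ℕ) ≤ b) := fun hm => hc.1 (memIcc.2 hm)
        have hy := memIcc.1 hc.2
        refine ⟨fun hm => ?_, memIcc.2 (by omega)⟩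
        have := memIcc.1 hm; omega
      · refine erase_contra hF h1 h2 hne ?_
        rintro C ⟨a, b, h0, hab, rfl⟩ hc
        have hx : ¬ ((a:ℕ) ≤ e2.tail ∧ (e2.tail:ℕ) ≤ b) := fun hm => hc.1 (memIcc.2 hm)
        have hy := memIcc.1 hc.2
        refine ⟨fun hm => ?_, memIcc.2 (by omega)⟩
        have := memIcc.1 hm; omega

end WrapProof2
section WrapProof3

open Finset Relation

variable {n : ℕ}

private noncomputable def par (F : Finset (DLink (n+3))) (v : Fin (n+3)) : Fin (n+3) :=
  if h : ∃ e ∈ F, e.head = v then h.choose.tail else 0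

private lemma par_eq {F : Finset (DLink (n+3))} (hF : NonShortenable F)
    {e : DLink (n+3)} (he : e ∈ F) : par F e.head = e.tail := by
  have h : ∃ e' ∈ F, e'.head = e.head := ⟨e, he, rfl⟩
  rw [par, dif_pos h]
  have hspec := h.choose_spec
  rw [head_unique hF hspec.1 he hspec.2]

private lemma par_zero {F : Finset (DLink (n+3))} (hF : NonShortenable F) :
    par F (0 : Fin (n+3)) = 0 := by
  rw [par, dif_neg]
  rintro ⟨e, he, hh⟩
  exact head_ne_zero hF he hh

private lemma par_iter_zero {F : Finset (DLink (n+3))} (hF : NonShortenable F) (k : ℕ) :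
    (par F)^[k] (0 : Fin (n+3)) = 0 := by
  induction k with
  | zero => rfl
  | succ k ih => rw [Function.iterate_succ_apply, par_zero hF]; exact ih

private lemma iter_of_descend {F : Finset (DLink (n+3))} (hF : NonShortenable F)
    {a b : Fin (n+3)} (h : Descend F a b) : ∃ k, (par F)^[k] b = a := by
  rw [descend_iff] at h
  induction h with
  | refl => exact ⟨0, rfl⟩
  | @tail b c hab hbc ih =>
    obtain ⟨k, hk⟩ := ih
    obtain ⟨e, he, t1, t2⟩ := hbc
    refine ⟨k+1, ?_⟩
    rw [Function.iterate_succ_apply, ← t2, par_eq hF he, t1, hk]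

private lemma descend_of_iter {F : Finset (DLink (n+3))} (hF : NonShortenable F)
    {a : Fin (n+3)} : ∀ (k : ℕ) (b : Fin (n+3)), (par F)^[k] b = a → Descend F a b := by
  intro k
  induction k with
  | zero =>
    intro b hb
    rw [Function.iterate_zero_apply] at hb
    rw [hb]
    exact Relation.ReflTransGen.refl
  | succ k ih =>
    intro b hb
    rw [Function.iterate_succ_apply] at hb
    by_cases hb0 : b = 0
    · rw [hb0, par_zero hF, par_iter_zero hF] at hb
      rw [hb0, ← hb]
      exact Relation.ReflTransGen.refl
    · obtain ⟨e, he, hhead⟩ := exists_head hF hb0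
      have hpar : par F b = e.tail := by rw [← hhead, par_eq hF he]
      rw [hpar] at hb
      exact descend_trans (ih _ hb) (hhead ▸ descend_step he)

private lemma reach_all {F : Finset (DLink (n+3))} (hF : NonShortenable F) (v : Fin (n+3)) :
    Descend F 0 v := by
  classical
  by_contra hv
  set W : Finset (Fin (n+3)) := Finset.univ.filter (fun x => ¬ Descend F 0 x) with hW
  have hmemW : ∀ x, x ∈ W ↔ ¬ Descend F 0 x := by intro x; simp [hW]
  have hWne : W.Nonempty := ⟨v, (hmemW v).2 hv⟩
  set α := W.min' hWne with hα
  have hαW : α ∈ W := W.min'_mem hWne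
  have hαle : ∀ x ∈ W, α ≤ x := fun x hx => W.min'_le x hx
  set B : Finset (Fin (n+3)) :=
    Finset.univ.filter (fun b => α ≤ b ∧ ∀ x, α ≤ x → x ≤ b → x ∈ W) with hB
  have hmemB : ∀ b, b ∈ B ↔ (α ≤ b ∧ ∀ x, α ≤ x → x ≤ b → x ∈ W) := by intro b; simp [hB]
  have hBne : B.Nonempty :=
    ⟨α, (hmemB α).2 ⟨le_refl α, fun x h1 h2 => by rwa [le_antisymm h2 h1]⟩⟩
  set β := B.max' hBne with hβ
  have hβB := B.max'_mem hBne
  rw [hmemB] at hβB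
  have hα0 : 0 < α := by
    refine Fin.pos_of_ne_zero ?_
    intro h0
    exact (hmemW α).1 hαW (h0 ▸ Relation.ReflTransGen.refl)
  obtain ⟨e, he, hcov⟩ := hF.1 (Finset.Icc α β) ⟨α, β, hα0, hβB.1, rfl⟩
  have hheadmem := Finset.mem_Icc.1 hcov.2
  have hheadW : e.head ∈ W := hβB.2 e.head hheadmem.1 hheadmem.2
  have htailW : e.tail ∈ W := by
    rw [hmemW]
    intro hdes
    exact (hmemW _).1 hheadW (descend_trans hdes (descend_step he))
  have htnm : ¬ ((α:ℕ) ≤ e.tail ∧ (e.tail:ℕ) ≤ β) := fun h => hcov.1 (memIcc.2 h)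
  have htα : (α:ℕ) ≤ e.tail := hαle e.tail htailW
  have htβ : (β:ℕ) < e.tail := by omega
  by_cases hadj : (e.tail:ℕ) = (β:ℕ) + 1
  · have hmem : e.tail ∈ B := by
      rw [hmemB]
      refine ⟨hαle e.tail htailW, fun x h1 h2 => ?_⟩
      by_cases hx : x = e.tail
      · rwa [hx]
      · have hxβ : x ≤ β := by
          rw [Fin.le_def]
          have h2' : (x:ℕ) ≤ e.tail := h2
          have hxne : (x:ℕ) ≠ e.tail := fun h => hx (Fin.ext h)
          omega
        exact hβB.2 x h1 hxβ
    have := Finset.le_max' B e.tail hmem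
    rw [← hβ, Fin.le_def] at this
    omega
  · have hlt : e.head < e.tail := by
      rw [Fin.lt_def]
      have := Fin.le_def.1 hheadmem.2
      omega
    obtain ⟨γ, δ, hγ0, hγδ, hδ, hcove, hsole⟩ := sole_cut_right hF he hlt
    have hqlt : (β:ℕ) + 1 < n + 3 := by
      have := e.tail.isLt
      omega
    set q : Fin (n+3) := ⟨(β:ℕ)+1, hqlt⟩ with hq
    have hqval : (q:ℕ) = (β:ℕ)+1 := rfl
    have hheadE := memIcc.1 hcove.2
    have hqE : q ∈ Finset.Icc γ δ := by
      rw [memIcc, hqval]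
      have := Fin.le_def.1 hheadmem.2
      omega
    have hqW : q ∉ W := by
      intro hqW
      have hmem : q ∈ B := by
        rw [hmemB]
        constructor
        · rw [Fin.le_def, hqval]
          have := Fin.le_def.1 (hαle _ hαW)
          have := Fin.le_def.1 hβB.1
          omega
        · intro x h1 h2
          by_cases hx : x = q
          · rwa [hx]
          · refine hβB.2 x h1 ?_
            rw [Fin.le_def]
            have h2' := Fin.le_def.1 h2
            rw [hqval] at h2'
            have hxne : (x:ℕ) ≠ q := fun h => hx (Fin.ext h)
            rw [hqval] at hxne
            omega
      have := Finset.le_max' B q hmem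
      rw [← hβ, Fin.le_def] at this
      rw [hqval] at this
      omega
    have hq0 : Descend F 0 q := by
      by_contra hc
      exact hqW ((hmemW q).2 hc)
    have h0E : (0 : Fin (n+3)) ∉ Finset.Icc γ δ := cut_not_zero ⟨γ, δ, hγ0, hγδ, rfl⟩
    obtain ⟨g, hg, hg1, hg2, hg3, _⟩ := entry (· ∈ Finset.Icc γ δ) hq0 h0E hqE
    have hgE : g = e := hsole g hg ⟨hg1, hg2⟩
    rw [hgE] at hg3
    exact (hmemW _).1 htailW hg3

private lemma descend_antisymm {F : Finset (DLink (n+3))} (hF : NonShortenable F)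
    {a b : Fin (n+3)} (h1 : Descend F a b) (h2 : Descend F b a) : a = b := by
  obtain ⟨j, hj⟩ := iter_of_descend hF h1
  obtain ⟨k, hk⟩ := iter_of_descend hF h2
  rcases Nat.eq_zero_or_pos (j + k) with hjk | hjk
  · have hj0 : j = 0 := by omega
    rw [hj0, Function.iterate_zero_apply] at hj
    exact hj.symm
  · have hper : (par F)^[j + k] a = a := by
      rw [Function.iterate_add_apply, hk, hj]
    have hper' : ∀ t, (par F)^[t * (j+k)] a = a := by
      intro t
      induction t with
      | zero => rw [Nat.zero_mul, Function.iterate_zero_apply]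
      | succ t ih => rw [Nat.succ_mul, Function.iterate_add_apply, hper, ih]
    obtain ⟨m, hm⟩ := iter_of_descend hF (reach_all hF a)
    have hge : m ≤ m * (j+k) := Nat.le_mul_of_pos_right m hjk
    have h0 : (par F)^[m*(j+k)] a = 0 := by
      have heq : m*(j+k) = (m*(j+k) - m) + m := by omega
      rw [heq, Function.iterate_add_apply, hm, par_iter_zero hF]
    have ha0 : a = 0 := (hper' m).symm.trans h0
    have hb0 : b = 0 := by
      rw [ha0] at hk
      rw [par_iter_zero hF] at hk
      exact hk.symm
    rw [ha0, hb0]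

private lemma not_self_parent {F : Finset (DLink (n+3))} (hF : NonShortenable F)
    {e : DLink (n+3)} (he : e ∈ F) : ¬ Descend F e.head e.tail :=
  fun h => e.ne (descend_antisymm hF (descend_step he) h)

private lemma descend_to_zero {F : Finset (DLink (n+3))} (hF : NonShortenable F)
    {v : Fin (n+3)} (h : Descend F v 0) : v = 0 := by
  obtain ⟨k, hk⟩ := iter_of_descend hF h
  rw [par_iter_zero hF] at hk
  exact hk.symm

private lemma last_step {F : Finset (DLink (n+3))} {q v : Fin (n+3)}
    (h : Descend F q v) (hne : q ≠ v) : ∃ e ∈ F, e.head = v ∧ Descend F q e.tail := by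
  rw [descend_iff] at h
  rcases Relation.ReflTransGen.cases_tail h with heq | ⟨c, hqc, hcv⟩
  · exact absurd heq.symm hne
  · obtain ⟨e, he, t1, t2⟩ := hcv
    exact ⟨e, he, t2, t1 ▸ hqc⟩

private lemma first_step {F : Finset (DLink (n+3))} {u q : Fin (n+3)}
    (h : Descend F u q) (hne : u ≠ q) : ∃ e ∈ F, e.tail = u ∧ Descend F e.head q := by
  rw [descend_iff] at h
  rcases Relation.ReflTransGen.cases_head h with heq | ⟨c, huc, hcq⟩
  · exact absurd heq hne
  · obtain ⟨e, he, t1, t2⟩ := huc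
    exact ⟨e, he, t1, t2 ▸ hcq⟩

private lemma descend_comparable {F : Finset (DLink (n+3))} (hF : NonShortenable F)
    {c v x : Fin (n+3)} (h1 : Descend F c x) (h2 : Descend F v x) :
    Descend F c v ∨ Descend F v c := by
  obtain ⟨j, hj⟩ := iter_of_descend hF h1
  obtain ⟨k, hk⟩ := iter_of_descend hF h2
  rcases le_total j k with h | h
  · right
    refine descend_of_iter hF (k-j) c ?_
    have heq : k = (k - j) + j := by omega
    rw [heq, Function.iterate_add_apply, hj] at hk
    exact hk
  · left
    refine descend_of_iter hF (j-k) v ?_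
    have heq : j = (j - k) + k := by omega
    rw [heq, Function.iterate_add_apply, hk] at hj
    exact hj

private lemma sibling_disj {F : Finset (DLink (n+3))} (hF : NonShortenable F)
    {e1 e2 : DLink (n+3)} (h1 : e1 ∈ F) (h2 : e2 ∈ F) (htail : e1.tail = e2.tail)
    (hne : e1.head ≠ e2.head) {x : Fin (n+3)}
    (hd1 : Descend F e1.head x) (hd2 : Descend F e2.head x) : False := by
  rcases descend_comparable hF hd1 hd2 with h | h
  · obtain ⟨e, he, hh, hd⟩ := last_step h hne
    rw [head_unique hF he h2 hh] at hd
    rw [← htail] at hd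
    exact not_self_parent hF h1 hd
  · obtain ⟨e, he, hh, hd⟩ := last_step h (Ne.symm hne)
    rw [head_unique hF he h1 hh] at hd
    rw [htail] at hd
    exact not_self_parent hF h2 hd

end WrapProof3
section WrapProof4

open Finset Relation

variable {n : ℕ}

private noncomputable def desS (F : Finset (DLink (n+3))) (v : Fin (n+3)) : Finset (Fin (n+3)) :=
  @Finset.filter _ (fun x => Descend F v x) (Classical.decPred _) Finset.univ

private lemma mem_desS {F : Finset (DLink (n+3))} {v x : Fin (n+3)} :
    x ∈ desS F v ↔ Descend F v x := by
  classical
  simp [desS]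

private lemma desS_nonempty (F : Finset (DLink (n+3))) (v : Fin (n+3)) :
    (desS F v).Nonempty := ⟨v, mem_desS.2 Relation.ReflTransGen.refl⟩

private noncomputable def loF (F : Finset (DLink (n+3))) (v : Fin (n+3)) : Fin (n+3) :=
  (desS F v).min' (desS_nonempty F v)

private noncomputable def hiF (F : Finset (DLink (n+3))) (v : Fin (n+3)) : Fin (n+3) :=
  (desS F v).max' (desS_nonempty F v)

private lemma lo_le {F : Finset (DLink (n+3))} {v x : Fin (n+3)} (h : Descend F v x) :
    loF F v ≤ x := Finset.min'_le _ _ (mem_desS.2 h)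

private lemma le_hi {F : Finset (DLink (n+3))} {v x : Fin (n+3)} (h : Descend F v x) :
    x ≤ hiF F v := Finset.le_max' _ _ (mem_desS.2 h)

private lemma lo_le_self {F : Finset (DLink (n+3))} (v : Fin (n+3)) : loF F v ≤ v :=
  lo_le Relation.ReflTransGen.refl

private lemma le_hi_self {F : Finset (DLink (n+3))} (v : Fin (n+3)) : v ≤ hiF F v :=
  le_hi Relation.ReflTransGen.refl

private lemma lo_pos {F : Finset (DLink (n+3))} (hF : NonShortenable F) {v : Fin (n+3)}
    (hv : v ≠ 0) : 0 < loF F v := by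
  refine Fin.pos_of_ne_zero ?_
  intro h0
  have hd : Descend F v (loF F v) := mem_desS.1 ((desS F v).min'_mem _)
  rw [h0] at hd
  exact hv (descend_to_zero hF hd)

private lemma span_right {F : Finset (DLink (n+3))} (hF : NonShortenable F)
    {g : DLink (n+3)} (hg : g ∈ F) {t : Fin (n+3)}
    (h1 : (g.head:ℕ) ≤ t) (h2 : (t:ℕ) < g.tail) : Descend F g.head t := by
  by_cases he : (t:ℕ) = g.head
  · rw [show t = g.head from Fin.ext he]
    exact Relation.ReflTransGen.refl
  obtain ⟨γ, δ, hγ0, hγδ, hδ, hcov, hsole⟩ := sole_cut_right hF hg (Fin.lt_def.2 (by omega))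
  have hmem := memIcc.1 hcov.2
  have htE : t ∈ Finset.Icc γ δ := memIcc.2 (by omega)
  have h0E : (0 : Fin (n+3)) ∉ Finset.Icc γ δ := cut_not_zero ⟨γ, δ, hγ0, hγδ, rfl⟩
  obtain ⟨g', hg', q1, q2, _, q4⟩ := entry (· ∈ Finset.Icc γ δ) (reach_all hF t) h0E htE
  rw [hsole g' hg' ⟨q1, q2⟩] at q4
  exact q4

private lemma span_left {F : Finset (DLink (n+3))} (hF : NonShortenable F)
    {g : DLink (n+3)} (hg : g ∈ F) {t : Fin (n+3)}
    (h1 : (g.tail:ℕ) < t) (h2 : (t:ℕ) ≤ g.head) : Descend F g.head t := by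
  by_cases he : (t:ℕ) = g.head
  · rw [show t = g.head from Fin.ext he]
    exact Relation.ReflTransGen.refl
  obtain ⟨γ, δ, hγ0, hγδ, hγ, hcov, hsole⟩ := sole_cut_left hF hg (Fin.lt_def.2 (by omega))
  have hmem := memIcc.1 hcov.2
  have htE : t ∈ Finset.Icc γ δ := memIcc.2 (by omega)
  have h0E : (0 : Fin (n+3)) ∉ Finset.Icc γ δ := cut_not_zero ⟨γ, δ, hγ0, hγδ, rfl⟩
  obtain ⟨g', hg', q1, q2, _, q4⟩ := entry (· ∈ Finset.Icc γ δ) (reach_all hF t) h0E htE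
  rw [hsole g' hg' ⟨q1, q2⟩] at q4
  exact q4

private lemma desc_interval {F : Finset (DLink (n+3))} (hF : NonShortenable F)
    {v : Fin (n+3)} (hv : v ≠ 0) :
    ∀ x : Fin (n+3), (loF F v:ℕ) ≤ x → (x:ℕ) ≤ hiF F v → Descend F v x := by
  classical
  set a := loF F v with ha
  set b := hiF F v with hb
  have hda : Descend F v a := mem_desS.1 ((desS F v).min'_mem _)
  have hdb : Descend F v b := mem_desS.1 ((desS F v).max'_mem _)
  set Bl : Finset (Fin (n+3)) :=
    Finset.univ.filter (fun c => a ≤ c ∧ ∀ y : Fin (n+3), a ≤ y → y ≤ c → Descend F v y) with hBl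
  have hmemBl : ∀ c, c ∈ Bl ↔ (a ≤ c ∧ ∀ y : Fin (n+3), a ≤ y → y ≤ c → Descend F v y) := by
    intro c; simp [hBl]
  have hBlne : Bl.Nonempty :=
    ⟨a, (hmemBl a).2 ⟨le_refl a, fun y h1 h2 => by rwa [le_antisymm h2 h1]⟩⟩
  set γ := Bl.max' hBlne with hγ
  have hγBl := Bl.max'_mem hBlne
  rw [hmemBl] at hγBl
  set Br : Finset (Fin (n+3)) :=
    Finset.univ.filter (fun c => c ≤ b ∧ ∀ y : Fin (n+3), c ≤ y → y ≤ b → Descend F v y) with hBr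
  have hmemBr : ∀ c, c ∈ Br ↔ (c ≤ b ∧ ∀ y : Fin (n+3), c ≤ y → y ≤ b → Descend F v y) := by
    intro c; simp [hBr]
  have hBrne : Br.Nonempty :=
    ⟨b, (hmemBr b).2 ⟨le_refl b, fun y h1 h2 => by rwa [le_antisymm h2 h1]⟩⟩
  set γ' := Br.min' hBrne with hγ'
  have hγBr := Br.min'_mem hBrne
  rw [hmemBr] at hγBr
  -- Claim 1 : v ≤ γ
  have hclaim1 : (v:ℕ) ≤ γ := by
    by_contra hcon
    have hvγ : (γ:ℕ) < v := by omega
    have hcut : IsCut (Finset.Icc a γ) := ⟨a, γ, lo_pos hF hv, hγBl.1, rfl⟩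
    have hvnot : v ∉ Finset.Icc a γ := fun hm => by
      have := memIcc.1 hm; omega
    have hγmem : γ ∈ Finset.Icc a γ := memIcc.2 ⟨Fin.le_def.1 hγBl.1, le_refl _⟩
    have hdγ : Descend F v γ := hγBl.2 γ hγBl.1 (le_refl _)
    obtain ⟨g, hg, q1, q2, q3, _⟩ := entry (· ∈ Finset.Icc a γ) hdγ hvnot hγmem
    have htla : (a:ℕ) ≤ g.tail := Fin.le_def.1 (lo_le q3)
    have htnm : ¬((a:ℕ) ≤ g.tail ∧ (g.tail:ℕ) ≤ γ) := fun h => q1 (memIcc.2 h)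
    have hhm := memIcc.1 q2
    have hqlt : (γ:ℕ) + 1 < n + 3 := by
      have := g.tail.isLt; omega
    set q : Fin (n+3) := ⟨(γ:ℕ)+1, hqlt⟩ with hq
    have hqval : (q:ℕ) = (γ:ℕ)+1 := rfl
    have hdq : Descend F v q := by
      by_cases hqt : q = g.tail
      · rw [hqt]; exact q3
      · have hlt : (q:ℕ) < g.tail := by
          have : (q:ℕ) ≠ g.tail := fun h => hqt (Fin.ext h)
          omega
        exact descend_trans (descend_trans q3 (descend_step hg))
          (span_right hF hg (by omega) hlt)
    have hqBl : q ∈ Bl := by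
      rw [hmemBl]
      refine ⟨by rw [Fin.le_def, hqval]; omega, fun y h1 h2 => ?_⟩
      by_cases hy : y = q
      · rwa [hy]
      · refine hγBl.2 y h1 ?_
        rw [Fin.le_def]
        have h2' := Fin.le_def.1 h2
        rw [hqval] at h2'
        have : (y:ℕ) ≠ q := fun h => hy (Fin.ext h)
        rw [hqval] at this
        omega
    have := Finset.le_max' Bl q hqBl
    rw [← hγ, Fin.le_def, hqval] at this
    omega
  -- Claim 2 : γ' ≤ v
  have hclaim2 : (γ':ℕ) ≤ v := by
    by_contra hcon
    have hvγ : (v:ℕ) < γ' := by omega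
    have hγ'0 : 0 < γ' := by
      rw [Fin.lt_def]
      have : (0 : Fin (n+3)).val = 0 := rfl
      omega
    have hcut : IsCut (Finset.Icc γ' b) := ⟨γ', b, hγ'0, hγBr.1, rfl⟩
    have hvnot : v ∉ Finset.Icc γ' b := fun hm => by
      have := memIcc.1 hm; omega
    have hγmem : γ' ∈ Finset.Icc γ' b := memIcc.2 ⟨le_refl _, Fin.le_def.1 hγBr.1⟩
    have hdγ : Descend F v γ' := hγBr.2 γ' (le_refl _) hγBr.1
    obtain ⟨g, hg, q1, q2, q3, _⟩ := entry (· ∈ Finset.Icc γ' b) hdγ hvnot hγmem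
    have htlb : (g.tail:ℕ) ≤ b := Fin.le_def.1 (le_hi q3)
    have htnm : ¬((γ':ℕ) ≤ g.tail ∧ (g.tail:ℕ) ≤ b) := fun h => q1 (memIcc.2 h)
    have hhm := memIcc.1 q2
    have hqlt : (γ':ℕ) - 1 < n + 3 := by
      have := γ'.isLt; omega
    set q : Fin (n+3) := ⟨(γ':ℕ)-1, hqlt⟩ with hq
    have hγ'1 : 1 ≤ (γ':ℕ) := hγ'0
    have hqval : (q:ℕ) = (γ':ℕ)-1 := rfl
    have hdq : Descend F v q := by
      by_cases hqt : q = g.tail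
      · rw [hqt]; exact q3
      · have hlt : (g.tail:ℕ) < q := by
          have : (q:ℕ) ≠ g.tail := fun h => hqt (Fin.ext h)
          omega
        exact descend_trans (descend_trans q3 (descend_step hg))
          (span_left hF hg hlt (by omega))
    have hqBr : q ∈ Br := by
      rw [hmemBr]
      refine ⟨by rw [Fin.le_def, hqval]; omega, fun y h1 h2 => ?_⟩
      by_cases hy : y = q
      · rwa [hy]
      · refine hγBr.2 y ?_ h2
        rw [Fin.le_def]
        have h1' := Fin.le_def.1 h1
        rw [hqval] at h1'
        have : (y:ℕ) ≠ q := fun h => hy (Fin.ext h)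
        rw [hqval] at this
        omega
    have := Finset.min'_le Br q hqBr
    rw [← hγ', Fin.le_def, hqval] at this
    omega
  -- conclusion
  intro x hx1 hx2
  by_cases hxγ : (x:ℕ) ≤ γ
  · exact hγBl.2 x (Fin.le_def.2 hx1) (Fin.le_def.2 hxγ)
  · refine hγBr.2 x (Fin.le_def.2 (by omega)) (Fin.le_def.2 hx2)

private lemma parent_adj {F : Finset (DLink (n+3))} (hF : NonShortenable F)
    {e : DLink (n+3)} (he : e ∈ F) :
    (e.tail:ℕ) + 1 = loF F e.head ∨ (hiF F e.head:ℕ) + 1 = e.tail := by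
  have hv : e.head ≠ 0 := head_ne_zero hF he
  have hnd : ¬ Descend F e.head e.tail := not_self_parent hF he
  have hnm : ¬((loF F e.head:ℕ) ≤ e.tail ∧ (e.tail:ℕ) ≤ hiF F e.head) :=
    fun h => hnd (desc_interval hF hv _ h.1 h.2)
  have hab : (loF F e.head:ℕ) ≤ e.head := Fin.le_def.1 (lo_le_self e.head)
  have hba : (e.head:ℕ) ≤ hiF F e.head := Fin.le_def.1 (le_hi_self e.head)
  by_cases hcase : (e.tail:ℕ) < loF F e.head
  · left
    by_contra hne
    have hlt : (e.tail:ℕ) + 1 < loF F e.head := by omega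
    have hqlt : (loF F e.head:ℕ) - 1 < n + 3 := by
      have := (loF F e.head).isLt; omega
    have hdq : Descend F e.head (⟨(loF F e.head:ℕ) - 1, hqlt⟩ : Fin (n+3)) :=
      span_left hF he (by show (e.tail:ℕ) < _; rw [show ((⟨(loF F e.head:ℕ) - 1, hqlt⟩ : Fin (n+3)):ℕ) = (loF F e.head:ℕ) - 1 from rfl]; omega)
        (by rw [show ((⟨(loF F e.head:ℕ) - 1, hqlt⟩ : Fin (n+3)):ℕ) = (loF F e.head:ℕ) - 1 from rfl]; omega)
    have := Fin.le_def.1 (lo_le hdq)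
    rw [show ((⟨(loF F e.head:ℕ) - 1, hqlt⟩ : Fin (n+3)):ℕ) = (loF F e.head:ℕ) - 1 from rfl] at this
    omega
  · right
    by_contra hne
    have hgt : (hiF F e.head:ℕ) + 1 < e.tail := by omega
    have hqlt : (hiF F e.head:ℕ) + 1 < n + 3 := by
      have := e.tail.isLt; omega
    have hdq : Descend F e.head (⟨(hiF F e.head:ℕ) + 1, hqlt⟩ : Fin (n+3)) :=
      span_right hF he
        (by rw [show ((⟨(hiF F e.head:ℕ) + 1, hqlt⟩ : Fin (n+3)):ℕ) = (hiF F e.head:ℕ) + 1 from rfl]; omega)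
        (by rw [show ((⟨(hiF F e.head:ℕ) + 1, hqlt⟩ : Fin (n+3)):ℕ) = (hiF F e.head:ℕ) + 1 from rfl]; omega)
    have := Fin.le_def.1 (le_hi hdq)
    rw [show ((⟨(hiF F e.head:ℕ) + 1, hqlt⟩ : Fin (n+3)):ℕ) = (hiF F e.head:ℕ) + 1 from rfl] at this
    omega

end WrapProof4
section WrapProof5

open Finset Relation

variable {n : ℕ}

private lemma L_right {F : Finset (DLink (n+3))} (hF : NonShortenable F) :
    ∀ (m : ℕ) (v : Fin (n+3)), v ≠ 0 → (loF F v:ℕ) = m →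
      ∀ q : Fin (n+3), (q:ℕ) = (hiF F v:ℕ) + 1 → Descend F q v := by
  intro m
  induction m using Nat.strong_induction_on with
  | _ m ih =>
  intro v hv hm q hq
  obtain ⟨e, he, hhead⟩ := exists_head hF hv
  subst hhead
  have hlov : (loF F e.head:ℕ) ≤ e.head := Fin.le_def.1 (lo_le_self e.head)
  have hhiv : (e.head:ℕ) ≤ hiF F e.head := Fin.le_def.1 (le_hi_self e.head)
  have hlopos : 0 < (loF F e.head:ℕ) := lo_pos hF hv
  rcases parent_adj hF he with hL | hR
  swap
  · have hqe : q = e.tail := Fin.ext (by omega)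
    rw [hqe]
    exact descend_step he
  · by_cases ht0 : e.tail = 0
    · exfalso
      have hlo1 : (loF F e.head:ℕ) = 1 := by
        rw [ht0] at hL
        simpa using hL.symm
      have hqne : q ≠ e.head := fun h => by
        rw [h] at hq; omega
      have hq0 : q ≠ 0 := fun h => by
        rw [h] at hq; simp at hq
      obtain ⟨g, hg, gt1, gd⟩ := first_step (reach_all hF q) (Ne.symm hq0)
      have hgh0 : g.head ≠ 0 := head_ne_zero hF hg
      by_cases hgh : g.head = e.head
      · rw [hgh] at gd
        have := Fin.le_def.1 (le_hi gd)
        omega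
      · rcases parent_adj hF hg with gL | gR
        · have hlog1 : (loF F g.head:ℕ) = 1 := by
            rw [gt1] at gL
            simpa using gL.symm
          have hghpos : 0 < (g.head:ℕ) := by
            rcases Nat.eq_zero_or_pos (g.head:ℕ) with h | h
            · exact absurd (Fin.ext h) hgh0
            · exact h
          have hx1 : Descend F g.head (loF F e.head) := by
            refine desc_interval hF hgh0 _ ?_ ?_
            · omega
            · have h1 : (loF F g.head:ℕ) ≤ g.head := Fin.le_def.1 (lo_le_self g.head)
              have h2 : (g.head:ℕ) ≤ hiF F g.head := Fin.le_def.1 (le_hi_self g.head)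
              omega
          have hx2 : Descend F e.head (loF F e.head) := mem_desS.1 ((desS F e.head).min'_mem _)
          exact sibling_disj hF hg he (gt1.trans ht0.symm) hgh hx1 hx2
        · rw [gt1] at gR
          simp at gR
    · -- e.tail ≠ 0 : show hiF F e.tail = hiF F e.head and recurse
      have hstep : Descend F e.tail e.head := descend_step he
      have hsub : (hiF F e.head:ℕ) ≤ hiF F e.tail :=
        Fin.le_def.1 (le_hi (descend_trans hstep (mem_desS.1 ((desS F e.head).max'_mem _))))
      have hlot : (loF F e.tail:ℕ) ≤ e.tail := Fin.le_def.1 (lo_le_self e.tail)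
      have hkey : (hiF F e.tail:ℕ) = hiF F e.head := by
        by_contra hne
        have hgt : (q:ℕ) ≤ hiF F e.tail := by omega
        have hdq : Descend F e.tail q := desc_interval hF ht0 q (by omega) hgt
        have hqnet : q ≠ e.tail := fun h => by
          rw [← h] at hL; omega
        obtain ⟨g, hg, gt1, gd⟩ := first_step hdq (fun h => hqnet h.symm)
        have hgh0 : g.head ≠ 0 := head_ne_zero hF hg
        have hgh : g.head ≠ e.head := fun h => by
          rw [h] at gd
          have := Fin.le_def.1 (le_hi gd)
          omega
        have hloq : (loF F g.head:ℕ) ≤ q := Fin.le_def.1 (lo_le gd)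
        have hhiq : (q:ℕ) ≤ hiF F g.head := Fin.le_def.1 (le_hi gd)
        have hloge : (loF F g.head:ℕ) = q := by
          by_contra hlt
          have hx1 : Descend F g.head (hiF F e.head) := by
            refine desc_interval hF hgh0 _ ?_ ?_ <;> omega
          have hx2 : Descend F e.head (hiF F e.head) := mem_desS.1 ((desS F e.head).max'_mem _)
          exact sibling_disj hF hg he gt1 hgh hx1 hx2
        have hlohig : (loF F g.head:ℕ) ≤ hiF F g.head := by
          have h1 : (loF F g.head:ℕ) ≤ g.head := Fin.le_def.1 (lo_le_self g.head)
          have h2 : (g.head:ℕ) ≤ hiF F g.head := Fin.le_def.1 (le_hi_self g.head)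
          omega
        have gt1v : (g.tail:ℕ) = e.tail := congrArg Fin.val gt1
        rcases parent_adj hF hg with gL | gR <;> omega
      exact descend_trans
        (ih (loF F e.tail:ℕ) (by omega) e.tail ht0 rfl q (by omega)) hstep

private lemma L_left {F : Finset (DLink (n+3))} (hF : NonShortenable F) :
    ∀ (m : ℕ) (v : Fin (n+3)), v ≠ 0 → n + 3 - (hiF F v:ℕ) = m →
      ∀ q : Fin (n+3), (q:ℕ) + 1 = (loF F v:ℕ) → Descend F q v := by
  intro m
  induction m using Nat.strong_induction_on with
  | _ m ih =>
  intro v hv hm q hq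
  by_cases hq0 : q = 0
  · rw [hq0]
    exact reach_all hF v
  obtain ⟨e, he, hhead⟩ := exists_head hF hv
  subst hhead
  have hlov : (loF F e.head:ℕ) ≤ e.head := Fin.le_def.1 (lo_le_self e.head)
  have hhiv : (e.head:ℕ) ≤ hiF F e.head := Fin.le_def.1 (le_hi_self e.head)
  have hlopos : 0 < (loF F e.head:ℕ) := lo_pos hF hv
  rcases parent_adj hF he with hL | hR
  · have hqe : q = e.tail := Fin.ext (by omega)
    rw [hqe]
    exact descend_step he
  · have ht0 : e.tail ≠ 0 := fun h => by
      rw [h] at hR; simp at hR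
    have hstep : Descend F e.tail e.head := descend_step he
    have hsub : (loF F e.tail:ℕ) ≤ loF F e.head :=
      Fin.le_def.1 (lo_le (descend_trans hstep (mem_desS.1 ((desS F e.head).min'_mem _))))
    have hhit : (e.tail:ℕ) ≤ hiF F e.tail := Fin.le_def.1 (le_hi_self e.tail)
    have hkey : (loF F e.tail:ℕ) = loF F e.head := by
      by_contra hne
      have hgt : (loF F e.tail:ℕ) ≤ q := by omega
      have hdq : Descend F e.tail q := desc_interval hF ht0 q hgt (by omega)
      have hqnet : q ≠ e.tail := fun h => by
        rw [← h] at hR; omega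
      obtain ⟨g, hg, gt1, gd⟩ := first_step hdq (fun h => hqnet h.symm)
      have hgh0 : g.head ≠ 0 := head_ne_zero hF hg
      have hgh : g.head ≠ e.head := fun h => by
        rw [h] at gd
        have := Fin.le_def.1 (lo_le gd)
        omega
      have hloq : (loF F g.head:ℕ) ≤ q := Fin.le_def.1 (lo_le gd)
      have hhiq : (q:ℕ) ≤ hiF F g.head := Fin.le_def.1 (le_hi gd)
      have hhige : (hiF F g.head:ℕ) = q := by
        by_contra hlt
        have hx1 : Descend F g.head (loF F e.head) := by
          refine desc_interval hF hgh0 _ ?_ ?_ <;> omega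
        have hx2 : Descend F e.head (loF F e.head) := mem_desS.1 ((desS F e.head).min'_mem _)
        exact sibling_disj hF hg he gt1 hgh hx1 hx2
      have hlohig : (loF F g.head:ℕ) ≤ hiF F g.head := by
        have h1 : (loF F g.head:ℕ) ≤ g.head := Fin.le_def.1 (lo_le_self g.head)
        have h2 : (g.head:ℕ) ≤ hiF F g.head := Fin.le_def.1 (le_hi_self g.head)
        omega
      have gt1v : (g.tail:ℕ) = e.tail := congrArg Fin.val gt1
      rcases parent_adj hF hg with gL | gR <;> omega
    have hmeas : n + 3 - (hiF F e.tail:ℕ) < m := by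
      have := (hiF F e.head).isLt
      omega
    exact descend_trans (ih _ hmeas e.tail ht0 rfl q (by omega)) hstep

end WrapProof5
section WrapProof6

open Finset Relation

variable {n : ℕ}

private lemma responsible_of {F : Finset (DLink (n+3))} (hF : NonShortenable F)
    {e : DLink (n+3)} (he : e ∈ F) {C : Finset (Fin (n+3))} (hC : IsCut C)
    (hcov : DCovers e C) (hsub : ∀ x ∈ C, Descend F e.head x) : Responsible F e C := by
  refine ⟨hC, hcov, ?_⟩
  intro d' hd' hdesc hcov'
  have h1 : Descend F e.head d'.head := hsub d'.head hcov'.2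
  have h2 : Descend F d'.head e.head := descend_trans hdesc (descend_step he)
  have h3 : d'.head = e.head := descend_antisymm hF h2 h1
  rw [h3] at hdesc
  exact not_self_parent hF he hdesc

private lemma responsible_sub {F : Finset (DLink (n+3))} (hF : NonShortenable F)
    {e : DLink (n+3)} (he : e ∈ F) {C : Finset (Fin (n+3))} (hR : Responsible F e C) :
    ∀ x ∈ C, Descend F e.head x := by
  obtain ⟨hC, hcov, hresp⟩ := hR
  obtain ⟨α, β, hα0, hαβ, rfl⟩ := hC
  have hv0 : e.head ≠ 0 := head_ne_zero hF he
  have hvm := memIcc.1 hcov.2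
  have hlov : (loF F e.head:ℕ) ≤ e.head := Fin.le_def.1 (lo_le_self e.head)
  have hhiv : (e.head:ℕ) ≤ hiF F e.head := Fin.le_def.1 (le_hi_self e.head)
  have hlopos : 0 < (loF F e.head:ℕ) := lo_pos hF hv0
  have hcut : IsCut (Finset.Icc α β) := ⟨α, β, hα0, hαβ, rfl⟩
  have hαlo : (loF F e.head:ℕ) ≤ α := by
    by_contra hcon
    have hqlt : (loF F e.head:ℕ) - 1 < n+3 := by
      have := (loF F e.head).isLt; omega
    have hqval : ((⟨(loF F e.head:ℕ)-1, hqlt⟩ : Fin (n+3)):ℕ) = (loF F e.head:ℕ)-1 := rfl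
    have hdqv : Descend F (⟨(loF F e.head:ℕ)-1, hqlt⟩ : Fin (n+3)) e.head :=
      L_left hF _ e.head hv0 rfl _ (by rw [hqval]; omega)
    have hqnev : (⟨(loF F e.head:ℕ)-1, hqlt⟩ : Fin (n+3)) ≠ e.head := fun h => by
      rw [Fin.ext_iff, hqval] at h; omega
    obtain ⟨e', he', hh, hdt⟩ := last_step hdqv hqnev
    rw [head_unique hF he' he hh] at hdt
    have hqC : (⟨(loF F e.head:ℕ)-1, hqlt⟩ : Fin (n+3)) ∈ Finset.Icc α β :=
      memIcc.2 (by rw [hqval]; omega)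
    obtain ⟨g, hg, q1, q2, _, q4⟩ := entry (· ∈ Finset.Icc α β)
      (reach_all hF _) (cut_not_zero hcut) hqC
    exact hresp g hg (descend_trans q4 hdt) ⟨q1, q2⟩
  have hβhi : (β:ℕ) ≤ hiF F e.head := by
    by_contra hcon
    have hqlt : (hiF F e.head:ℕ) + 1 < n+3 := by
      have := β.isLt; omega
    have hqval : ((⟨(hiF F e.head:ℕ)+1, hqlt⟩ : Fin (n+3)):ℕ) = (hiF F e.head:ℕ)+1 := rfl
    have hdqv : Descend F (⟨(hiF F e.head:ℕ)+1, hqlt⟩ : Fin (n+3)) e.head :=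
      L_right hF _ e.head hv0 rfl _ hqval
    have hqnev : (⟨(hiF F e.head:ℕ)+1, hqlt⟩ : Fin (n+3)) ≠ e.head := fun h => by
      rw [Fin.ext_iff, hqval] at h; omega
    obtain ⟨e', he', hh, hdt⟩ := last_step hdqv hqnev
    rw [head_unique hF he' he hh] at hdt
    have hqC : (⟨(hiF F e.head:ℕ)+1, hqlt⟩ : Fin (n+3)) ∈ Finset.Icc α β :=
      memIcc.2 (by rw [hqval]; omega)
    obtain ⟨g, hg, q1, q2, _, q4⟩ := entry (· ∈ Finset.Icc α β)
      (reach_all hF _) (cut_not_zero hcut) hqC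
    exact hresp g hg (descend_trans q4 hdt) ⟨q1, q2⟩
  intro x hx
  have hxm := memIcc.1 hx
  exact desc_interval hF hv0 x (by omega) (by omega)

private lemma intersects_symm {a b : Link (n+3)} (h : Intersects a b) : Intersects b a := by
  unfold Intersects Crossing at h ⊢
  tauto

private lemma confine {K : Finset (Link (n+3))} {α β : Fin (n+3)}
    (hnc : ∀ ℓ ∈ K, ¬ crossesCut ℓ (Finset.Icc α β)) {g h : Link (n+3)}
    (hpath : Relation.ReflTransGen (fun a b => a ∈ K ∧ b ∈ K ∧ Intersects a b) g h)
    (h1 : g.lo ∈ Finset.Icc α β) (h2 : g.hi ∈ Finset.Icc α β) :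
    h.lo ∈ Finset.Icc α β ∧ h.hi ∈ Finset.Icc α β := by
  induction hpath with
  | refl => exact ⟨h1, h2⟩
  | @tail b c hab hbc ih =>
    obtain ⟨hbK, hcK, hint⟩ := hbc
    obtain ⟨hb1, hb2⟩ := ih
    have hnc' := hnc c hcK
    have hone : c.lo ∈ Finset.Icc α β ∨ c.hi ∈ Finset.Icc α β := by
      have hbl := memIcc.1 hb1
      have hbh := memIcc.1 hb2
      rcases hint with (h | h | h | h) | (⟨u1, u2, u3⟩ | ⟨u1, u2, u3⟩)
      · exact Or.inl (h ▸ hb1)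
      · exact Or.inr (h ▸ hb1)
      · exact Or.inl (h ▸ hb2)
      · exact Or.inr (h ▸ hb2)
      · have v1 := Fin.lt_def.1 u1
        have v2 := Fin.lt_def.1 u2
        exact Or.inl (memIcc.2 (by omega))
      · have v1 := Fin.lt_def.1 u2
        have v2 := Fin.lt_def.1 u3
        exact Or.inr (memIcc.2 (by omega))
    rcases hone with h | h
    · refine ⟨h, ?_⟩
      by_contra hno
      exact hnc' (Or.inl ⟨h, hno⟩)
    · refine ⟨?_, h⟩
      by_contra hno
      exact hnc' (Or.inr ⟨hno, h⟩)

end WrapProof6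
section WrapProof7

open Finset Relation

variable {n : ℕ}

private def RL (K : Finset (Link (n+3))) (v : Fin (n+3)) (g : Link (n+3)) : Prop :=
  g ∈ K ∧ ∃ ℓ' ∈ K, ℓ'.Incident v ∧
    Relation.ReflTransGen (fun a b => a ∈ K ∧ b ∈ K ∧ Intersects a b) ℓ' g

private lemma rl_iff {K : Finset (Link (n+3))} {v : Fin (n+3)} {g : Link (n+3)} :
    RL K v g ↔ (g ∈ K ∧ ∃ ℓ' ∈ K, ℓ'.Incident v ∧
      Relation.ReflTransGen (fun a b => a ∈ K ∧ b ∈ K ∧ Intersects a b) ℓ' g) := Iff.rfl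

end WrapProof7

/-- for a non-shortenable directed WRAP solution `F` and
`K ⊆ L`, a directed link `(u, v) ∈ F` is contained in `Drop_F(K)` iff `v` is
connected to a `v`-good vertex in the link intersection graph `H[K]`. -/
theorem drop_iff_connected_to_good {n : ℕ}
    (L : Finset (Link (n + 3))) (c : Link (n + 3) → ℝ)
    (F : Finset (DLink (n + 3))) (hF : NonShortenable F)
    (K : Finset (Link (n + 3))) (hK : K ⊆ L)
    (d : DLink (n + 3)) (hd : d ∈ F) :
    d ∈ Drop F K ↔ ∃ w : Fin (n + 3), VGood F d.head w ∧ ConnVert K d.head w := by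
  classical
  have hv0 : d.head ≠ 0 := head_ne_zero hF hd
  constructor
  · intro hdrop
    have hdC : ∀ C : Finset (Fin (n+3)), Responsible F d C → (cutLinks K C).Nonempty :=
      hdrop.2
    by_contra hno
    push_neg at hno
    have hno' : ∀ w, ConnVert K d.head w → Descend F d.head w := by
      intro w hconn
      by_contra hdes
      exact hno w hdes hconn
    by_cases hinc : ∃ ℓ ∈ K, ℓ.Incident d.head
    · obtain ⟨ℓ0, hℓ0K, hℓ0inc⟩ := hinc
      set S : Finset (Fin (n+3)) := Finset.univ.filter (fun w => ConnVert K d.head w) with hS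
      have hmemS : ∀ w, w ∈ S ↔ ConnVert K d.head w := fun w => by simp [hS]
      have hvS : d.head ∈ S :=
        (hmemS _).2 ⟨ℓ0, hℓ0K, ℓ0, hℓ0K, hℓ0inc, hℓ0inc, Relation.ReflTransGen.refl⟩
      have hSne : S.Nonempty := ⟨_, hvS⟩
      set α := S.min' hSne with hα
      set β := S.max' hSne with hβ
      have hSdesc : ∀ w ∈ S, Descend F d.head w := fun w hw => hno' w ((hmemS w).1 hw)
      have hdα : Descend F d.head α := hSdesc α (S.min'_mem hSne)
      have hdβ : Descend F d.head β := hSdesc β (S.max'_mem hSne)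
      have hα0 : 0 < α := by
        refine Fin.pos_of_ne_zero fun h0 => ?_
        rw [h0] at hdα
        exact hv0 (descend_to_zero hF hdα)
      have hαβ : α ≤ β := le_trans (S.min'_le _ hvS) (S.le_max' _ hvS)
      have hCd : ∀ x : Fin (n+3), (α:ℕ) ≤ x → (x:ℕ) ≤ β → Descend F d.head x := by
        intro x h1 h2
        have ha := Fin.le_def.1 (lo_le hdα)
        have hb := Fin.le_def.1 (le_hi hdβ)
        exact desc_interval hF hv0 x (by omega) (by omega)
      have hcov : DCovers d (Finset.Icc α β) := by
        refine ⟨fun hm => ?_,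
          memIcc.2 ⟨Fin.le_def.1 (S.min'_le _ hvS), Fin.le_def.1 (S.le_max' _ hvS)⟩⟩
        have hm' := memIcc.1 hm
        exact not_self_parent hF hd (hCd d.tail hm'.1 hm'.2)
      have hresp : Responsible F d (Finset.Icc α β) :=
        responsible_of hF hd ⟨α, β, hα0, hαβ, rfl⟩ hcov
          (fun x hx => hCd x (memIcc.1 hx).1 (memIcc.1 hx).2)
      obtain ⟨ℓ, hℓ⟩ := hdC _ hresp
      rw [cutLinks, Finset.mem_filter] at hℓ
      obtain ⟨hℓK, hcross⟩ := hℓ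
      have hRS : ∀ g, RL K d.head g → g.lo ∈ S ∧ g.hi ∈ S := by
        intro g hg
        obtain ⟨hgK, ℓ', hℓ'K, hinc', hpath⟩ := rl_iff.1 hg
        exact ⟨(hmemS _).2 ⟨ℓ', hℓ'K, g, hgK, hinc', Or.inl rfl, hpath⟩,
          (hmemS _).2 ⟨ℓ', hℓ'K, g, hgK, hinc', Or.inr rfl, hpath⟩⟩
      have hRext : ∀ g h', RL K d.head g → h' ∈ K → Intersects g h' → RL K d.head h' := by
        intro g h' hg hh'K hint
        obtain ⟨hgK, ℓ', hℓ'K, hinc', hpath⟩ := rl_iff.1 hg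
        exact rl_iff.2 ⟨hh'K, ℓ', hℓ'K, hinc', hpath.tail ⟨hgK, hh'K, hint⟩⟩
      have hSbound : ∀ w ∈ S, (α:ℕ) ≤ w ∧ (w:ℕ) ≤ β :=
        fun w hw => ⟨Fin.le_def.1 (S.min'_le _ hw), Fin.le_def.1 (S.le_max' _ hw)⟩
      have hSR : ∀ w ∈ S, ∃ g, RL K d.head g ∧ g.Incident w := by
        intro w hw
        obtain ⟨ℓ', hℓ'K, f, hfK, hinc', hfinc, hpath⟩ := (hmemS w).1 hw
        exact ⟨f, rl_iff.2 ⟨hfK, ℓ', hℓ'K, hinc', hpath⟩, hfinc⟩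
      have hT4 : ∀ x : Fin (n+3), (α:ℕ) ≤ x → (x:ℕ) ≤ β →
          ∃ g, RL K d.head g ∧ (g.lo:ℕ) ≤ x ∧ (x:ℕ) ≤ g.hi := by
        intro x hx1 hx2
        obtain ⟨gα, hgαR, hgαinc⟩ := hSR α (S.min'_mem hSne)
        obtain ⟨gβ, hgβR, hgβinc⟩ := hSR β (S.max'_mem hSne)
        have hgαS := hRS gα hgαR
        have hgβS := hRS gβ hgβR
        have hgαlo := hSbound _ hgαS.1
        have hgαhi := hSbound _ hgαS.2
        have hgβlo := hSbound _ hgβS.1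
        have hgβhi := hSbound _ hgβS.2
        have hgαlh := Fin.lt_def.1 gα.lo_lt_hi
        have hgβlh := Fin.lt_def.1 gβ.lo_lt_hi
        have hglo : (gα.lo:ℕ) = α := by
          rcases hgαinc with h | h
          · exact congrArg Fin.val h
          · have := congrArg Fin.val h; omega
        have hghi : (gβ.hi:ℕ) = β := by
          rcases hgβinc with h | h
          · have := congrArg Fin.val h; omega
          · exact congrArg Fin.val h
        by_cases hcα : (x:ℕ) ≤ gα.hi
        · exact ⟨gα, hgαR, by omega, hcα⟩
        by_cases hcβ : (gβ.lo:ℕ) ≤ x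
        · exact ⟨gβ, hgβR, hcβ, by omega⟩
        by_contra hnone
        push_neg at hnone
        obtain ⟨hgαK, ℓ1, hℓ1K, hinc1, hpath1⟩ := rl_iff.1 hgαR
        obtain ⟨hgβK, ℓ2, hℓ2K, hinc2, hpath2⟩ := rl_iff.1 hgβR
        have hstep12 : Intersects ℓ1 ℓ2 := by
          left
          rcases hinc1 with h | h <;> rcases hinc2 with h' | h'
          · exact Or.inl (h.trans h'.symm)
          · exact Or.inr (Or.inl (h.trans h'.symm))
          · exact Or.inr (Or.inr (Or.inl (h.trans h'.symm)))
          · exact Or.inr (Or.inr (Or.inr (h.trans h'.symm)))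
        have hsymm : Symmetric (fun a b : Link (n+3) => a ∈ K ∧ b ∈ K ∧ Intersects a b) :=
          fun a b hq => ⟨hq.2.1, hq.1, intersects_symm hq.2.2⟩
        have hpath : Relation.ReflTransGen
            (fun a b : Link (n+3) => a ∈ K ∧ b ∈ K ∧ Intersects a b) gα gβ :=
          Relation.ReflTransGen.trans
            (haveI : Std.Symm (fun a b : Link (n+3) => a ∈ K ∧ b ∈ K ∧ Intersects a b) := ⟨hsymm⟩; Relation.ReflTransGen.symmetric.symm _ _ hpath1)
            (Relation.ReflTransGen.trans
              (Relation.ReflTransGen.single ⟨hℓ1K, hℓ2K, hstep12⟩) hpath2)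
        have hinv : ∀ h' : Link (n+3),
            Relation.ReflTransGen
              (fun a b : Link (n+3) => a ∈ K ∧ b ∈ K ∧ Intersects a b) gα h' →
            RL K d.head h' ∧ (h'.hi:ℕ) < x := by
          intro h' hp
          induction hp with
          | refl => exact ⟨rl_iff.2 ⟨hgαK, ℓ1, hℓ1K, hinc1, hpath1⟩, by omega⟩
          | @tail b cc hab hbc ih =>
            obtain ⟨hbR, hbhi⟩ := ih
            have hcR : RL K d.head cc := hRext b cc hbR hbc.2.1 hbc.2.2
            refine ⟨hcR, ?_⟩
            by_cases hclo : (cc.lo:ℕ) ≤ x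
            · exact hnone cc hcR hclo
            · exfalso
              have hblh := Fin.lt_def.1 b.lo_lt_hi
              have hclh := Fin.lt_def.1 cc.lo_lt_hi
              rcases hbc.2.2 with (h | h | h | h) | (⟨u1, u2, u3⟩ | ⟨u1, u2, u3⟩)
              · have := congrArg Fin.val h; omega
              · have := congrArg Fin.val h; omega
              · have := congrArg Fin.val h; omega
              · have := congrArg Fin.val h; omega
              · have v1 := Fin.lt_def.1 u1
                have v2 := Fin.lt_def.1 u2
                omega
              · have v1 := Fin.lt_def.1 u1
                have v2 := Fin.lt_def.1 u2
                have v3 := Fin.lt_def.1 u3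
                omega
        have hfin := (hinv gβ hpath).2
        omega
      have hllh := Fin.lt_def.1 ℓ.lo_lt_hi
      rcases hcross with ⟨hin, hout⟩ | ⟨hout, hin⟩
      · have hx := memIcc.1 hin
        have hy : ¬((α:ℕ) ≤ ℓ.hi ∧ (ℓ.hi:ℕ) ≤ β) := fun h => hout (memIcc.2 h)
        obtain ⟨g, hgR, hg1, hg2⟩ := hT4 ℓ.lo hx.1 hx.2
        have hgS := hRS g hgR
        have hglo := hSbound _ hgS.1
        have hghi := hSbound _ hgS.2
        have hglh := Fin.lt_def.1 g.lo_lt_hi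
        have hint : Intersects g ℓ := by
          by_cases he1 : (g.lo:ℕ) = ℓ.lo
          · exact Or.inl (Or.inl (Fin.ext he1))
          · by_cases he2 : (g.hi:ℕ) = ℓ.lo
            · exact Or.inl (Or.inr (Or.inr (Or.inl (Fin.ext he2))))
            · exact Or.inr (Or.inl ⟨Fin.lt_def.2 (by omega), Fin.lt_def.2 (by omega),
                Fin.lt_def.2 (by omega)⟩)
        have hRℓ := hRext g ℓ hgR hℓK hint
        have hfin := hSbound _ (hRS ℓ hRℓ).2
        omega
      · have hx := memIcc.1 hin
        have hy : ¬((α:ℕ) ≤ ℓ.lo ∧ (ℓ.lo:ℕ) ≤ β) := fun h => hout (memIcc.2 h)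
        obtain ⟨g, hgR, hg1, hg2⟩ := hT4 ℓ.hi hx.1 hx.2
        have hgS := hRS g hgR
        have hglo := hSbound _ hgS.1
        have hghi := hSbound _ hgS.2
        have hglh := Fin.lt_def.1 g.lo_lt_hi
        have hint : Intersects g ℓ := by
          by_cases he1 : (g.lo:ℕ) = ℓ.hi
          · exact Or.inl (Or.inr (Or.inl (Fin.ext he1)))
          · by_cases he2 : (g.hi:ℕ) = ℓ.hi
            · exact Or.inl (Or.inr (Or.inr (Or.inr (Fin.ext he2))))
            · exact Or.inr (Or.inr ⟨Fin.lt_def.2 (by omega), Fin.lt_def.2 (by omega),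
                Fin.lt_def.2 (by omega)⟩)
        have hRℓ := hRext g ℓ hgR hℓK hint
        have hfin := hSbound _ (hRS ℓ hRℓ).1
        omega
    · have hpos : 0 < d.head := Fin.pos_of_ne_zero hv0
      have hcov : DCovers d (Finset.Icc d.head d.head) := by
        refine ⟨fun hm => ?_, memIcc.2 ⟨le_refl _, le_refl _⟩⟩
        have := memIcc.1 hm
        exact d.ne (Fin.ext (by omega))
      have hresp : Responsible F d (Finset.Icc d.head d.head) :=
        responsible_of hF hd ⟨_, _, hpos, le_refl _, rfl⟩ hcov (fun x hx => by
          have := memIcc.1 hx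
          rw [show x = d.head from Fin.ext (by omega)]
          exact Relation.ReflTransGen.refl)
      obtain ⟨ℓ, hℓ⟩ := hdC _ hresp
      rw [cutLinks, Finset.mem_filter] at hℓ
      rcases hℓ.2 with ⟨h1, _⟩ | ⟨_, h2⟩
      · have := memIcc.1 h1
        exact hinc ⟨ℓ, hℓ.1, Or.inl (Fin.ext (by omega))⟩
      · have := memIcc.1 h2
        exact hinc ⟨ℓ, hℓ.1, Or.inr (Fin.ext (by omega))⟩
  · rintro ⟨w, hgood, hconn⟩
    show d ∈ F ∧ ∀ C : Finset (Fin (n+3)), Responsible F d C → (cutLinks K C).Nonempty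
    refine ⟨hd, ?_⟩
    intro C hresp
    by_contra hne
    rw [Finset.not_nonempty_iff_eq_empty] at hne
    have hnc : ∀ ℓ ∈ K, ¬ crossesCut ℓ C := by
      intro ℓ hℓ hcr
      have hm : ℓ ∈ cutLinks K C := Finset.mem_filter.2 ⟨hℓ, hcr⟩
      rw [hne] at hm
      exact absurd hm (Finset.notMem_empty ℓ)
    obtain ⟨α, β, hα0, hαβ, hCe⟩ := hresp.1
    subst hCe
    obtain ⟨ℓ', hℓ'K, f, hfK, hinc', hfinc, hpath⟩ := hconn
    have hvC := hresp.2.1.2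
    have hl0 : ℓ'.lo ∈ Finset.Icc α β ∧ ℓ'.hi ∈ Finset.Icc α β := by
      have hncl := hnc ℓ' hℓ'K
      rcases hinc' with h | h
      · have hloC : ℓ'.lo ∈ Finset.Icc α β := h.symm ▸ hvC
        refine ⟨hloC, ?_⟩
        by_contra hcon
        exact hncl (Or.inl ⟨hloC, hcon⟩)
      · have hhiC : ℓ'.hi ∈ Finset.Icc α β := h.symm ▸ hvC
        refine ⟨?_, hhiC⟩
        by_contra hcon
        exact hncl (Or.inr ⟨hcon, hhiC⟩)
    have hf := confine hnc hpath hl0.1 hl0.2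
    have hwC : w ∈ Finset.Icc α β := by
      rcases hfinc with h | h
      · exact h ▸ hf.1
      · exact h ▸ hf.2
    exact hgood (responsible_sub hF hd hresp w hwC)
end

section
/- Let (G, L, c, r, e_r) be a rooted WRAP instance, X ⊆ L a festoon, and C ∈ C_G a 2-cut. Then |δ_X(C)| ≤ 4, i.e., at most 4 links of X have exactly one endpoint in C. -/
variable {n : ℕ}

/-- A finset of `Fin p` in which any two elements differ by at most one has
cardinality at most 2. -/
lemma sparse_card {p : ℕ} (s : Finset (Fin p))
    (h : ∀ i ∈ s, ∀ j ∈ s, (i : ℕ) < (j : ℕ) → (j : ℕ) ≤ (i : ℕ) + 1) :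
    s.card ≤ 2 := by
  rcases s.eq_empty_or_nonempty with rfl | hs
  · simp
  · set m := s.min' hs with hmdef
    have hm := s.min'_mem hs
    have hcard : s.card = (s.image Fin.val).card :=
      (Finset.card_image_of_injective s Fin.val_injective).symm
    rw [hcard]
    have hsub : s.image Fin.val ⊆ Finset.Icc (m : ℕ) ((m : ℕ) + 1) := by
      intro x hx
      obtain ⟨j, hj, rfl⟩ := Finset.mem_image.mp hx
      have h1 : (m : ℕ) ≤ j := s.min'_le j hj
      rcases eq_or_lt_of_le h1 with he | hlt
      · simp only [Finset.mem_Icc]; omega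
      · have := h m hm j hj hlt
        simp only [Finset.mem_Icc]; omega
    calc (s.image Fin.val).card ≤ _ := Finset.card_le_card hsub
      _ = 2 := by rw [Nat.card_Icc]; omega

/-- a festoon `X` crosses any 2-cut `C ∈ C_G` at most four
times: `|δ_X(C)| ≤ 4`. -/
theorem festoon_light {n : ℕ}
    (L : Finset (Link (n + 3))) (c : Link (n + 3) → ℝ)
    (X : Finset (Link (n + 3))) (hXL : X ⊆ L) (hX : IsFestoon X)
    (C : Finset (Fin (n + 3))) (hC : IsCut C) :
    (cutLinks X C).card ≤ 4 := by
  classical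
  obtain ⟨a, b, ha, hab, rfl⟩ := hC
  obtain ⟨p, hp, f, ⟨hmono, hadj, hnon⟩, rfl⟩ := hX
  set C := Finset.Icc a b with hCdef
  set SA : Finset (Fin p) :=
    Finset.univ.filter (fun i => (f i).lo ∉ C ∧ (f i).hi ∈ C) with hSAdef
  set SB : Finset (Fin p) :=
    Finset.univ.filter (fun i => (f i).lo ∈ C ∧ (f i).hi ∉ C) with hSBdef
  have hsub : cutLinks (Finset.image f Finset.univ) C ⊆ Finset.image f (SA ∪ SB) := by
    intro ℓ hℓ
    simp only [cutLinks, Finset.mem_filter, Finset.mem_image] at hℓ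
    obtain ⟨⟨i, -, rfl⟩, hcr⟩ := hℓ
    refine Finset.mem_image.mpr ⟨i, ?_, rfl⟩
    rcases hcr with ⟨h1, h2⟩ | ⟨h1, h2⟩
    · exact Finset.mem_union_right _ (by simp [hSBdef, h1, h2])
    · exact Finset.mem_union_left _ (by simp [hSAdef, h1, h2])
  have hSA : SA.card ≤ 2 := by
    apply sparse_card
    intro i hi j hj hij
    by_contra hgt
    push_neg at hgt
    apply hnon i j hgt
    simp only [hSAdef, Finset.mem_filter, Finset.mem_univ, true_and] at hi hj
    have hlt : i < j := Fin.lt_def.mpr hij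
    obtain ⟨hlo, hhi⟩ := hmono i j hlt
    obtain ⟨hai, hbi⟩ := Finset.mem_Icc.mp hi.2
    -- lo_j ∉ Icc a b and lo_j < hi_j ≤ b ⇒ lo_j < a
    have hjb : (f j).lo ≤ b := le_of_lt (lt_of_lt_of_le (f j).lo_lt_hi
      (Finset.mem_Icc.mp hj.2).2)
    have hja : (f j).lo < a := by
      by_contra hcon
      push_neg at hcon
      exact hj.1 (Finset.mem_Icc.mpr ⟨hcon, hjb⟩)
    exact Or.inr (Or.inl ⟨hlo, lt_of_lt_of_le hja hai, hhi⟩)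
  have hSB : SB.card ≤ 2 := by
    apply sparse_card
    intro i hi j hj hij
    by_contra hgt
    push_neg at hgt
    apply hnon i j hgt
    simp only [hSBdef, Finset.mem_filter, Finset.mem_univ, true_and] at hi hj
    have hlt : i < j := Fin.lt_def.mpr hij
    obtain ⟨hlo, hhi⟩ := hmono i j hlt
    obtain ⟨haj, hbj⟩ := Finset.mem_Icc.mp hj.1
    -- hi_i ∉ Icc a b and a ≤ lo_i < hi_i ⇒ b < hi_i
    have hia : a ≤ (f i).hi := le_of_lt (lt_of_le_of_lt
      (Finset.mem_Icc.mp hi.1).1 (f i).lo_lt_hi)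
    have hib : b < (f i).hi := by
      by_contra hcon
      push_neg at hcon
      exact hi.2 (Finset.mem_Icc.mpr ⟨hia, hcon⟩)
    exact Or.inr (Or.inl ⟨hlo, lt_of_le_of_lt hbj hib, hhi⟩)
  calc (cutLinks (Finset.image f Finset.univ) C).card
      ≤ (Finset.image f (SA ∪ SB)).card := Finset.card_le_card hsub
    _ ≤ (SA ∪ SB).card := Finset.card_image_le
    _ ≤ SA.card + SB.card := Finset.card_union_le _ _
    _ ≤ 4 := by omega
end

section
/- Let X, Y, Z be festoons with X ≼ Y ≼ Z (i.e., I_X ⊆ I_Y ⊆ I_Z). If X and Z are tangled, then Y and Z are tangled. -/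
variable {n : ℕ}

section AuxTangled

variable {n : ℕ}

lemma fest_mono_lo {p : ℕ} {f : Fin p → Link n} (hf : IsFestoonSeq f)
    {i j : Fin p} (hij : i ≤ j) : (f i).lo ≤ (f j).lo := by
  rcases eq_or_lt_of_le hij with h | h
  · rw [h]
  · exact le_of_lt (hf.1 i j h).1

lemma fest_mono_hi {p : ℕ} {f : Fin p → Link n} (hf : IsFestoonSeq f)
    {i j : Fin p} (hij : i ≤ j) : (f i).hi ≤ (f j).hi := by
  rcases eq_or_lt_of_le hij with h | h
  · rw [h]
  · exact le_of_lt (hf.1 i j h).2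

lemma fest_consec {p : ℕ} {f : Fin p → Link n} (hf : IsFestoonSeq f)
    {i j : Fin p} (hij : (i : ℕ) + 1 = (j : ℕ)) : (f j).lo ≤ (f i).hi := by
  have hlt : i < j := by
    rw [Fin.lt_def]; omega
  obtain ⟨hmlo, hmhi⟩ := hf.1 i j hlt
  have hint := hf.2.1 i j hij
  rcases hint with (h | h | h | h) | (⟨h1, h2, h3⟩ | ⟨h1, h2, h3⟩)
  · exact absurd h (ne_of_lt hmlo)
  · exact absurd (lt_trans (f j).lo_lt_hi (h ▸ hmlo)) (lt_irrefl _)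
  · exact le_of_eq h.symm
  · exact absurd h (ne_of_lt hmhi)
  · exact le_of_lt h2
  · exact absurd h1 (not_lt_of_gt hmlo)

lemma fest_cover {p : ℕ} {f : Fin p → Link n} (hf : IsFestoonSeq f) (hp : 0 < p)
    {v : Fin n} (h1 : (f ⟨0, hp⟩).lo ≤ v)
    (h2 : v ≤ (f ⟨p - 1, by omega⟩).hi) :
    ∃ i, (f i).lo ≤ v ∧ v ≤ (f i).hi := by
  classical
  set S : Finset (Fin p) := Finset.univ.filter (fun i => (f i).lo ≤ v) with hS
  have hne : S.Nonempty := ⟨⟨0, hp⟩, by simp [hS, h1]⟩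
  set i := S.max' hne with hi
  have hiS : i ∈ S := S.max'_mem hne
  have hilo : (f i).lo ≤ v := by
    have := hiS; rw [hS, Finset.mem_filter] at this; exact this.2
  refine ⟨i, hilo, ?_⟩
  by_cases hlast : (i : ℕ) = p - 1
  · have : i = ⟨p - 1, by omega⟩ := Fin.ext hlast
    rw [this]; exact h2
  · have hi1 : (i : ℕ) + 1 < p := by
      have := i.isLt; omega
    set j : Fin p := ⟨(i : ℕ) + 1, hi1⟩ with hj
    have hjS : j ∉ S := by
      intro hmem
      have hle := S.le_max' j hmem
      rw [← hi, Fin.le_def] at hle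
      have hle' : (i : ℕ) + 1 ≤ (i : ℕ) := hle
      omega
    have hjlo : v < (f j).lo := by
      rw [hS, Finset.mem_filter] at hjS
      push_neg at hjS
      exact hjS (Finset.mem_univ j)
    have := fest_consec hf (i := i) (j := j) (by simp [hj])
    exact le_of_lt (lt_of_lt_of_le hjlo this)

lemma intersects_endpoint {ℓ f : Link n} (h : Intersects ℓ f) :
    ∃ v : Fin n, (v = f.lo ∨ v = f.hi) ∧ ℓ.lo ≤ v ∧ v ≤ ℓ.hi := by
  have hll := le_of_lt ℓ.lo_lt_hi
  rcases h with (h | h | h | h) | (⟨h1, h2, h3⟩ | ⟨h1, h2, h3⟩)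
  · exact ⟨f.lo, Or.inl rfl, le_of_eq h, h ▸ hll⟩
  · exact ⟨f.hi, Or.inr rfl, le_of_eq h, h ▸ hll⟩
  · exact ⟨f.lo, Or.inl rfl, h ▸ hll, le_of_eq h.symm⟩
  · exact ⟨f.hi, Or.inr rfl, h ▸ hll, le_of_eq h.symm⟩
  · exact ⟨f.lo, Or.inl rfl, le_of_lt h1, le_of_lt h2⟩
  · exact ⟨f.hi, Or.inr rfl, le_of_lt h2, le_of_lt h3⟩

lemma fin_zero_le' {p : ℕ} (hp : 0 < p) (i : Fin p) : (⟨0, hp⟩ : Fin p) ≤ i := by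
  rw [Fin.le_def]; exact Nat.zero_le _

lemma fin_le_last' {p : ℕ} (hp : 0 < p) (i : Fin p) :
    i ≤ (⟨p - 1, by omega⟩ : Fin p) := by
  rw [Fin.le_def]
  show (i : ℕ) ≤ p - 1
  have := i.isLt; omega

/-- If no link of the festoon `g` intersects `z`, but `z` has an endpoint in
the festoon interval of `g`, then `z` is strictly nested inside it. -/
lemma nested_of_not_intersect {p : ℕ} {g : Fin p → Link n}
    (hg : IsFestoonSeq g) (hp : 0 < p) (z : Link n)
    (hno : ∀ i : Fin p, ¬ Intersects (g i) z)
    {v : Fin n} (hv : v = z.lo ∨ v = z.hi)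
    (h1 : (g ⟨0, hp⟩).lo ≤ v) (h2 : v ≤ (g ⟨p - 1, by omega⟩).hi) :
    (g ⟨0, hp⟩).lo < z.lo ∧ z.hi < (g ⟨p - 1, by omega⟩).hi := by
  obtain ⟨i, hlo, hhi⟩ := fest_cover hg hp h1 h2
  have hnoi := hno i
  have hshared : ∀ w : Fin n, (w = z.lo ∨ w = z.hi) →
      (g i).lo ≠ w ∧ (g i).hi ≠ w := by
    intro w hw
    constructor <;> intro heq <;> apply hnoi <;> rcases hw with hw | hw
    · exact Or.inl (Or.inl (heq.trans hw))
    · exact Or.inl (Or.inr (Or.inl (heq.trans hw)))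
    · exact Or.inl (Or.inr (Or.inr (Or.inl (heq.trans hw))))
    · exact Or.inl (Or.inr (Or.inr (Or.inr (heq.trans hw))))
  obtain ⟨hne1, hne2⟩ := hshared v hv
  have hvlo : (g i).lo < v := lt_of_le_of_ne hlo hne1
  have hvhi : v < (g i).hi := lt_of_le_of_ne hhi (Ne.symm hne2)
  have hmain : (g i).lo < z.lo ∧ z.hi < (g i).hi := by
    rcases hv with hv | hv
    · subst hv
      refine ⟨hvlo, ?_⟩
      rcases lt_trichotomy z.hi (g i).hi with h | h | h
      · exact h
      · exact absurd h.symm (hshared z.hi (Or.inr rfl)).2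
      · exact absurd (Or.inr (Or.inl ⟨hvlo, hvhi, h⟩)) hnoi
    · subst hv
      refine ⟨?_, hvhi⟩
      rcases lt_trichotomy (g i).lo z.lo with h | h | h
      · exact h
      · exact absurd h (hshared z.lo (Or.inl rfl)).1
      · exact absurd (Or.inr (Or.inr ⟨h, hvlo, hvhi⟩)) hnoi
  have hz : (⟨0, hp⟩ : Fin p) ≤ i := fin_zero_le' hp i
  have hz' : i ≤ (⟨p - 1, by omega⟩ : Fin p) := fin_le_last' hp i
  exact ⟨lt_of_le_of_lt (fest_mono_lo hg hz) hmain.1,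
    lt_of_lt_of_le hmain.2 (fest_mono_hi hg hz')⟩

end AuxTangled

/-- for festoons `X ≼ Y ≼ Z` (nested festoon intervals), if
`X` and `Z` are tangled, then `Y` and `Z` are tangled. -/
theorem sandwiched_festoons_tangled {n : ℕ}
    (X Y Z : Finset (Link (n + 3)))
    (hX : IsFestoon X) (hY : IsFestoon Y) (hZ : IsFestoon Z)
    (hXY : festoonIval X ⊆ festoonIval Y)
    (hYZ : festoonIval Y ⊆ festoonIval Z)
    (hXZ : Tangled X Z) :
    Tangled Y Z := by
  classical
  by_contra hnot
  obtain ⟨q, hq, g, hgseq, hYeq⟩ := hY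
  obtain ⟨m, hm, h, hhseq, hZeq⟩ := hZ
  obtain ⟨ℓ, hℓX, f, hfZ, hint⟩ := hXZ
  set a := (g ⟨0, hq⟩).lo with ha
  set b := (g ⟨q - 1, by omega⟩).hi with hb
  -- no link of Y intersects any link of Z
  have hno : ∀ (i : Fin q) (z : Link (n + 3)), z ∈ Z → ¬ Intersects (g i) z := by
    intro i z hz hI
    exact hnot ⟨g i, by rw [hYeq]; exact Finset.mem_image_of_mem g (Finset.mem_univ i),
      z, hz, hI⟩
  -- characterization of membership in festoonIval Y
  have hchar : ∀ w : Fin (n + 3), w ∈ festoonIval Y → a ≤ w ∧ w ≤ b := by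
    rintro w ⟨⟨ℓ₁, hℓ₁, hl⟩, ⟨ℓ₂, hℓ₂, hr⟩⟩
    rw [hYeq] at hℓ₁ hℓ₂
    obtain ⟨i₁, -, rfl⟩ := Finset.mem_image.mp hℓ₁
    obtain ⟨i₂, -, rfl⟩ := Finset.mem_image.mp hℓ₂
    have h01 : (⟨0, hq⟩ : Fin q) ≤ i₁ := fin_zero_le' hq i₁
    have h02 : i₂ ≤ (⟨q - 1, by omega⟩ : Fin q) := fin_le_last' hq i₂
    exact ⟨le_trans (fest_mono_lo hgseq h01) hl,
      le_trans hr (fest_mono_hi hgseq h02)⟩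
  -- endpoints of ℓ lie in [a, b]
  have hmemX : ∀ w : Fin (n + 3), (w = ℓ.lo ∨ w = ℓ.hi) → w ∈ festoonIval X := by
    rintro w (rfl | rfl)
    · exact ⟨⟨ℓ, hℓX, le_refl _⟩, ⟨ℓ, hℓX, le_of_lt ℓ.lo_lt_hi⟩⟩
    · exact ⟨⟨ℓ, hℓX, le_of_lt ℓ.lo_lt_hi⟩, ⟨ℓ, hℓX, le_refl _⟩⟩
  have hℓlo := hchar _ (hXY (hmemX ℓ.lo (Or.inl rfl)))
  have hℓhi := hchar _ (hXY (hmemX ℓ.hi (Or.inr rfl)))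
  -- f has an endpoint v ∈ [a, b]
  obtain ⟨v, hv, hv1, hv2⟩ := intersects_endpoint hint
  have hva : a ≤ v := le_trans hℓlo.1 hv1
  have hvb : v ≤ b := le_trans hv2 hℓhi.2
  -- f is strictly nested in [a, b]
  have hfn := nested_of_not_intersect hgseq hq f (fun i => hno i f hfZ) hv hva hvb
  -- the leftmost link of Z has lo ≤ a
  have haY : a ∈ festoonIval Y := by
    refine ⟨⟨g ⟨0, hq⟩, ?_, le_refl _⟩, ⟨g ⟨q - 1, by omega⟩, ?_, ?_⟩⟩
    · rw [hYeq]; exact Finset.mem_image_of_mem g (Finset.mem_univ _)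
    · rw [hYeq]; exact Finset.mem_image_of_mem g (Finset.mem_univ _)
    · exact le_trans (le_of_lt (g ⟨0, hq⟩).lo_lt_hi)
        (fest_mono_hi hgseq (fin_le_last' hq _))
  obtain ⟨⟨z0, hz0Z, hz0le⟩, -⟩ := hYZ haY
  have hZ0 : (h ⟨0, hm⟩).lo ≤ a := by
    rw [hZeq] at hz0Z
    obtain ⟨j, -, rfl⟩ := Finset.mem_image.mp hz0Z
    exact le_trans (fest_mono_lo hhseq (fin_zero_le' hm j)) hz0le
  -- f = h k for some k
  have hfZ' := hfZ
  rw [hZeq] at hfZ'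
  obtain ⟨k, -, hk⟩ := Finset.mem_image.mp hfZ'
  -- downward induction along the Z-festoon
  have key : ∀ t : ℕ, ∀ j : Fin m, (j : ℕ) + t = (k : ℕ) → a < (h j).lo := by
    intro t
    induction t with
    | zero =>
      intro j hj
      have : j = k := Fin.ext (by omega)
      rw [this, hk]
      exact hfn.1
    | succ t ih =>
      intro j hj
      have hj1 : (j : ℕ) + 1 < m := by have := k.isLt; omega
      set j' : Fin m := ⟨(j : ℕ) + 1, hj1⟩ with hj'
      have ha' : a < (h j').lo := ih j' (by simp [hj']; omega)
      have hcons : (h j').lo ≤ (h j).hi := fest_consec hhseq (by simp [hj'])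
      have hjk : j ≤ k := by rw [Fin.le_def]; omega
      have h1 : a ≤ (h j).hi := le_of_lt (lt_of_lt_of_le ha' hcons)
      have h2 : (h j).hi ≤ b := by
        have : (h j).hi ≤ (h k).hi := fest_mono_hi hhseq hjk
        rw [hk] at this
        exact le_trans this (le_of_lt hfn.2)
      have := nested_of_not_intersect hgseq hq (h j)
        (fun i => hno i (h j) (by rw [hZeq]; exact Finset.mem_image_of_mem h (Finset.mem_univ j)))
        (Or.inr rfl) h1 h2
      exact this.1
  have hfinal : a < (h ⟨0, hm⟩).lo := key (k : ℕ) ⟨0, hm⟩ (by simp)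
  exact absurd hZ0 (not_le_of_gt hfinal)
end

section
/- Let (G, L, c, r, e_r) be a rooted WRAP instance with a non-shortenable directed WRAP solution F⃗, let v ∈ V \ {r}, and let X ⊆ L be a festoon. Then X contains a link incident to a v-good vertex if and only if the festoon interval I_X contains a v-good vertex. -/
variable {n : ℕ}

section AuxWRAP

open Finset

variable {N : ℕ} [NeZero N] {F : Finset (DLink N)}

private lemma mem_Icc_val {a b x : Fin N} :
    x ∈ Finset.Icc a b ↔ (a : ℕ) ≤ (x : ℕ) ∧ (x : ℕ) ≤ (b : ℕ) := by
  rw [Finset.mem_Icc, Fin.le_def, Fin.le_def]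

/-- From deletion-minimality: every arc has a cut that it alone covers. -/
private lemma only_cover (hF : NonShortenable F) {d : DLink N} (hd : d ∈ F) :
    ∃ C : Finset (Fin N), IsCut C ∧ DCovers d C ∧ ∀ e ∈ F, e ≠ d → ¬ DCovers e C := by
  have h := hF.2.1 d hd
  simp only [IsDirSolution] at h
  push_neg at h
  obtain ⟨C, hC, hnone⟩ := h
  obtain ⟨e, he, hcov⟩ := hF.1 C hC
  have hed : e = d := by
    by_contra hne
    exact hnone e (Finset.mem_erase.mpr ⟨hne, he⟩) hcov
  subst hed
  exact ⟨C, hC, hcov, fun e' he' hne' => hnone e' (Finset.mem_erase.mpr ⟨hne', he'⟩)⟩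

/-- From shortening-minimality: replacing `d` by a strict shortening `d'`
yields a cut that only `d` covers and that contains the new tail. -/
private lemma shorten_cut (hF : NonShortenable F) {d d' : DLink N} (hd : d ∈ F)
    (hs : IsShortening d' d) (hne : d' ≠ d) :
    ∃ C : Finset (Fin N), IsCut C ∧ DCovers d C ∧
      (∀ e ∈ F, e ≠ d → ¬ DCovers e C) ∧ d'.tail ∈ C := by
  have h := hF.2.2 d hd d' hs hne
  simp only [IsDirSolution] at h
  push_neg at h
  obtain ⟨C, hC, hnone⟩ := h
  obtain ⟨e, he, hcov⟩ := hF.1 C hC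
  have hed : e = d := by
    by_contra hne'
    exact hnone e (Finset.mem_insert_of_mem (Finset.mem_erase.mpr ⟨hne', he⟩)) hcov
  subst hed
  have hd' := hnone d' (Finset.mem_insert_self _ _)
  have hhead : d'.head ∈ C := by rw [hs.1]; exact hcov.2
  have htl : d'.tail ∈ C := by
    by_contra ht
    exact hd' ⟨ht, hhead⟩
  exact ⟨C, hC, hcov,
    fun e' he' hne' => hnone e' (Finset.mem_insert_of_mem (Finset.mem_erase.mpr ⟨hne', he'⟩)), htl⟩

/-- Tight cut for a left-going arc: a cut covered only by `d` whose right end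
is immediately to the left of the tail of `d`. -/
private lemma tight_left (hF : NonShortenable F) {d : DLink N} (hd : d ∈ F)
    (hlg : d.head < d.tail) :
    ∃ a b : Fin N, 0 < a ∧ a ≤ b ∧ DCovers d (Finset.Icc a b) ∧
      (∀ e ∈ F, e ≠ d → ¬ DCovers e (Finset.Icc a b)) ∧ (b : ℕ) + 1 = (d.tail : ℕ) := by
  classical
  set P : Fin N → Prop := fun b => ∃ a : Fin N, 0 < a ∧ a ≤ b ∧
      DCovers d (Finset.Icc a b) ∧ ∀ e ∈ F, e ≠ d → ¬ DCovers e (Finset.Icc a b) with hP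
  have hPne : (Finset.univ.filter P).Nonempty := by
    obtain ⟨C, hC, hcov, honly⟩ := only_cover hF hd
    obtain ⟨a, b, ha, hab, rfl⟩ := hC
    exact ⟨b, Finset.mem_filter.mpr ⟨Finset.mem_univ _, a, ha, hab, hcov, honly⟩⟩
  set b := (Finset.univ.filter P).max' hPne with hb
  have hPb : P b := (Finset.mem_filter.mp ((Finset.univ.filter P).max'_mem hPne)).2
  have hmax : ∀ b', P b' → b' ≤ b :=
    fun b' hb' => Finset.le_max' _ b' (Finset.mem_filter.mpr ⟨Finset.mem_univ _, hb'⟩)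
  obtain ⟨a, ha, hab, hcov, honly⟩ := hPb
  have hhead := mem_Icc_val.mp hcov.2
  have hbt : (b : ℕ) < (d.tail : ℕ) := by
    by_contra h
    push_neg at h
    apply hcov.1
    exact mem_Icc_val.mpr ⟨le_trans hhead.1 (Fin.le_def.mp (le_of_lt hlg)), h⟩
  by_cases heq : (b : ℕ) + 1 = (d.tail : ℕ)
  · exact ⟨a, b, ha, hab, hcov, honly, heq⟩
  exfalso
  have hlt : (b : ℕ) + 1 < (d.tail : ℕ) := by omega
  have hsN : (b : ℕ) + 1 < N := lt_trans hlt d.tail.isLt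
  set s : Fin N := ⟨(b : ℕ) + 1, hsN⟩ with hsdef
  have hheadb : (d.head : ℕ) ≤ (b : ℕ) := hhead.2
  have hsh : s ≠ d.head := by
    intro h
    have := congrArg Fin.val h
    simp only [hsdef] at this
    omega
  set d' : DLink N := ⟨s, d.head, hsh⟩ with hd'
  have hshort : IsShortening d' d := by
    refine ⟨rfl, ?_, ?_⟩
    · rw [min_eq_right (le_of_lt hlg)]
      exact Fin.le_def.mpr (by simp only [hd', hsdef]; omega)
    · rw [max_eq_left (le_of_lt hlg)]
      exact Fin.le_def.mpr (by simp only [hd', hsdef]; omega)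
  have hne : d' ≠ d := by
    intro h
    have := congrArg (fun x => (DLink.tail x : ℕ)) h
    simp only [hd', hsdef] at this
    omega
  obtain ⟨C, hC, hcov', honly', hmem⟩ := shorten_cut hF hd hshort hne
  obtain ⟨a', b', ha', hab', rfl⟩ := hC
  have hP' : P b' := ⟨a', ha', hab', hcov', honly'⟩
  have h1 := Fin.le_def.mp (hmax b' hP')
  have h2 := (mem_Icc_val.mp hmem).2
  simp only [hd', hsdef] at h2
  omega

/-- Tight cut for a right-going arc: a cut covered only by `d` whose left end
is immediately to the right of the tail of `d`. -/
private lemma tight_right (hF : NonShortenable F) {d : DLink N} (hd : d ∈ F)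
    (hrg : d.tail < d.head) :
    ∃ a b : Fin N, 0 < a ∧ a ≤ b ∧ DCovers d (Finset.Icc a b) ∧
      (∀ e ∈ F, e ≠ d → ¬ DCovers e (Finset.Icc a b)) ∧ (a : ℕ) = (d.tail : ℕ) + 1 := by
  classical
  set P : Fin N → Prop := fun a => 0 < a ∧ ∃ b : Fin N, a ≤ b ∧
      DCovers d (Finset.Icc a b) ∧ ∀ e ∈ F, e ≠ d → ¬ DCovers e (Finset.Icc a b) with hP
  have hPne : (Finset.univ.filter P).Nonempty := by
    obtain ⟨C, hC, hcov, honly⟩ := only_cover hF hd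
    obtain ⟨a, b, ha, hab, rfl⟩ := hC
    exact ⟨a, Finset.mem_filter.mpr ⟨Finset.mem_univ _, ha, b, hab, hcov, honly⟩⟩
  set a := (Finset.univ.filter P).min' hPne with ha
  have hPa : P a := (Finset.mem_filter.mp ((Finset.univ.filter P).min'_mem hPne)).2
  have hmin : ∀ a', P a' → a ≤ a' :=
    fun a' ha' => Finset.min'_le _ a' (Finset.mem_filter.mpr ⟨Finset.mem_univ _, ha'⟩)
  obtain ⟨ha0, b, hab, hcov, honly⟩ := hPa
  have hhead := mem_Icc_val.mp hcov.2
  have hta : (d.tail : ℕ) < (a : ℕ) := by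
    by_contra h
    push_neg at h
    apply hcov.1
    exact mem_Icc_val.mpr ⟨h, le_trans (Fin.le_def.mp (le_of_lt hrg)) hhead.2⟩
  by_cases heq : (a : ℕ) = (d.tail : ℕ) + 1
  · exact ⟨a, b, ha0, hab, hcov, honly, heq⟩
  exfalso
  have hlt : (d.tail : ℕ) + 1 < (a : ℕ) := by omega
  have hsN : (a : ℕ) - 1 < N := lt_trans (by omega : (a : ℕ) - 1 < (a : ℕ)) a.isLt
  set s : Fin N := ⟨(a : ℕ) - 1, hsN⟩ with hsdef
  have hheada : (a : ℕ) ≤ (d.head : ℕ) := hhead.1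
  have hsh : s ≠ d.head := by
    intro h
    have := congrArg Fin.val h
    simp only [hsdef] at this
    omega
  set d' : DLink N := ⟨s, d.head, hsh⟩ with hd'
  have hshort : IsShortening d' d := by
    refine ⟨rfl, ?_, ?_⟩
    · rw [min_eq_left (le_of_lt hrg)]
      exact Fin.le_def.mpr (by simp only [hd', hsdef]; omega)
    · rw [max_eq_right (le_of_lt hrg)]
      exact Fin.le_def.mpr (by simp only [hd', hsdef]; omega)
  have hne : d' ≠ d := by
    intro h
    have := congrArg (fun x => (DLink.tail x : ℕ)) h
    simp only [hd', hsdef] at this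
    omega
  obtain ⟨C, hC, hcov', honly', hmem⟩ := shorten_cut hF hd hshort hne
  obtain ⟨a', b', ha', hab', rfl⟩ := hC
  have hP' : P a' := ⟨ha', b', hab', hcov', honly'⟩
  have h1 := Fin.le_def.mp (hmin a' hP')
  have h2 := (mem_Icc_val.mp hmem).1
  simp only [hd', hsdef] at h2
  omega

/-- There is no infinite ancestor chain in a non-shortenable solution. -/
private lemma no_chain (hF : NonShortenable F) (x : ℕ → Fin N)
    (hx : ∀ i, ∃ d ∈ F, d.tail = x (i + 1) ∧ d.head = x i) : False := by
  suffices h : ∀ m k : ℕ, N - k ≤ m → ∀ y : ℕ → Fin N,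
      (∀ i, ∃ d ∈ F, d.tail = y (i + 1) ∧ d.head = y i) →
      (∀ i, k ≤ (y i : ℕ)) → False by
    exact h N 0 (by omega) x hx (fun i => Nat.zero_le _)
  intro m
  induction m with
  | zero =>
    intro k hk y hy hge
    have h1 := (y 0).isLt
    have h2 := hge 0
    omega
  | succ m ih =>
    intro k hk y hy hge
    -- take the minimum value of the chain
    have hne : {v : ℕ | ∃ i, (y i : ℕ) = v}.Nonempty := ⟨(y 0 : ℕ), 0, rfl⟩
    obtain ⟨i0, hi0⟩ : ∃ i, (y i : ℕ) = sInf {v : ℕ | ∃ i, (y i : ℕ) = v} :=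
      Nat.sInf_mem hne
    obtain ⟨mv, hmveq⟩ : ∃ m' : ℕ, m' = sInf {v : ℕ | ∃ i, (y i : ℕ) = v} := ⟨_, rfl⟩
    obtain ⟨z, hzdef⟩ : ∃ z : ℕ → Fin N, ∀ i, z i = y (i0 + i) := ⟨_, fun _ => rfl⟩
    have hzc : ∀ i, ∃ d ∈ F, d.tail = z (i + 1) ∧ d.head = z i := by
      intro i
      have h := hy (i0 + i)
      have e : i0 + i + 1 = i0 + (i + 1) := by omega
      rw [e] at h
      rw [hzdef, hzdef]
      exact h
    have hzm : ∀ i, mv ≤ (z i : ℕ) := by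
      intro i
      rw [hzdef, hmveq]
      exact Nat.sInf_le ⟨i0 + i, rfl⟩
    have hz0 : (z 0 : ℕ) = mv := by
      rw [hzdef, Nat.add_zero, hmveq]
      exact hi0
    obtain ⟨d0, hd0, hdt, hdh⟩ := hzc 0
    have hz1 : (z 0 : ℕ) < (z 1 : ℕ) := by
      have hne' : (z 1 : ℕ) ≠ (z 0 : ℕ) := by
        intro h
        exact d0.ne (by rw [hdt, hdh]; exact Fin.ext h)
      have := hzm 1
      have := hzm 0
      omega
    have hlg : d0.head < d0.tail := by
      rw [Fin.lt_def]
      rw [congrArg Fin.val hdt, congrArg Fin.val hdh]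
      exact hz1
    obtain ⟨a, b, ha, hab, hcov, honly, hb1⟩ := tight_left hF hd0 hlg
    have hheadv : (a : ℕ) ≤ (z 0 : ℕ) ∧ (z 0 : ℕ) ≤ (b : ℕ) := by
      have := mem_Icc_val.mp hcov.2
      rwa [congrArg Fin.val hdh] at this
    have htv : (b : ℕ) + 1 = (z 1 : ℕ) := by rwa [congrArg Fin.val hdt] at hb1
    by_cases hcase : ∃ i, 1 ≤ i ∧ (b : ℕ) + 1 ≤ (z i : ℕ) ∧ (z (i + 1) : ℕ) ≤ (b : ℕ)
    · -- an arc re-enters the tight cut from the right: contradiction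
      obtain ⟨i, hi1, hti, hsi⟩ := hcase
      obtain ⟨d1, hd1, h1t, h1h⟩ := hzc i
      have hrg : d1.tail < d1.head := by
        rw [Fin.lt_def, congrArg Fin.val h1t, congrArg Fin.val h1h]
        omega
      have hne01 : d1 ≠ d0 := by
        intro h
        have := congrArg (fun e => (DLink.head e : ℕ)) h
        rw [congrArg Fin.val h1h, congrArg Fin.val hdh] at this
        omega
      obtain ⟨a', b', ha', hab', hcov', honly', ha1⟩ := tight_right hF hd1 hrg
      have h1tv : (a' : ℕ) = (z (i + 1) : ℕ) + 1 := by
        rwa [congrArg Fin.val h1t] at ha1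
      have hheadv' : (a' : ℕ) ≤ (z i : ℕ) ∧ (z i : ℕ) ≤ (b' : ℕ) := by
        have := mem_Icc_val.mp hcov'.2
        rwa [congrArg Fin.val h1h] at this
      have hzi1 := hzm (i + 1)
      -- the union Icc a b' is a cut covered by nobody
      have hcut : IsCut (Finset.Icc a b') :=
        ⟨a, b', ha, Fin.le_def.mpr (by omega), rfl⟩
      obtain ⟨e, he, hecov⟩ := hF.1 _ hcut
      have heh := mem_Icc_val.mp hecov.2
      by_cases hcb : (e.head : ℕ) ≤ (b : ℕ)
      · have hcovT : DCovers e (Finset.Icc a b) := by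
          refine ⟨fun hmem => hecov.1 ?_, mem_Icc_val.mpr ⟨heh.1, hcb⟩⟩
          have := mem_Icc_val.mp hmem
          exact mem_Icc_val.mpr ⟨this.1, by omega⟩
        have hed : e = d0 := by
          by_contra hne'
          exact honly e he hne' hcovT
        apply hecov.1
        rw [hed]
        have hdtv : (d0.tail : ℕ) = (z 1 : ℕ) := congrArg Fin.val hdt
        exact mem_Icc_val.mpr (by omega)
      · have hcovT' : DCovers e (Finset.Icc a' b') := by
          refine ⟨fun hmem => hecov.1 ?_, mem_Icc_val.mpr ⟨by omega, heh.2⟩⟩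
          have := mem_Icc_val.mp hmem
          exact mem_Icc_val.mpr ⟨by omega, this.2⟩
        have hed : e = d1 := by
          by_contra hne'
          exact honly' e he hne' hcovT'
        apply hecov.1
        rw [hed]
        have h1tv2 : (d1.tail : ℕ) = (z (i + 1) : ℕ) := congrArg Fin.val h1t
        exact mem_Icc_val.mpr (by omega)
    · -- the chain stays to the right of the cut forever: recurse
      push_neg at hcase
      have hall : ∀ i, 1 ≤ i → (b : ℕ) + 1 ≤ (z i : ℕ) := by
        intro i
        induction i with
        | zero => intro h; omega
        | succ j ihj =>
          intro _
          by_cases hj : 1 ≤ j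
          · have := hcase j hj (ihj hj)
            omega
          · have hj0 : j = 0 := by omega
            subst hj0
            omega
      have hk1 : k ≤ mv := by
        have h1 := hge i0
        rw [hmveq] at *
        omega
      refine ih ((b : ℕ) + 1) ?_ (fun i => z (i + 1)) (fun i => hzc (i + 1)) ?_
      · have h0 := (z 0).isLt
        have := hzm 0
        omega
      · intro i
        exact hall (i + 1) (by omega)

/-- Every vertex between the endpoints of an arc of `F` is a descendant of
its tail. -/
private lemma desc_between (hF : NonShortenable F) {d : DLink N} (hd : d ∈ F)
    {w : Fin N} (h1 : min d.tail d.head ≤ w) (h2 : w ≤ max d.tail d.head) :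
    Descend F d.tail w := by
  by_cases hwt : w = d.tail
  · subst hwt; exact Relation.ReflTransGen.refl
  by_cases hwh : w = d.head
  · exact Relation.ReflTransGen.single ⟨d, hd, rfl, hwh.symm⟩
  set d' : DLink N := ⟨w, d.head, hwh⟩ with hd'
  have hshort : IsShortening d' d := ⟨rfl, h1, h2⟩
  have hne : d' ≠ d := fun h => hwt (congrArg DLink.tail h)
  obtain ⟨C, hC, hcov, honly, hmem⟩ := shorten_cut hF hd hshort hne
  by_contra hdesc
  have step : ∀ u : Fin N, u ∈ C → ¬ Descend F d.tail u →
      ∃ u' : Fin N, (u' ∈ C ∧ ¬ Descend F d.tail u') ∧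
        ∃ e ∈ F, e.tail = u' ∧ e.head = u := by
    intro u huC hu
    obtain ⟨a, b, ha, hab, hCeq⟩ := hC
    have hu0 : (0 : Fin N) < u := by
      have := Finset.mem_Icc.mp (hCeq ▸ huC)
      exact lt_of_lt_of_le ha this.1
    obtain ⟨e, he, hecov⟩ := hF.1 (Finset.Icc u u) ⟨u, u, hu0, le_refl u, rfl⟩
    have hhead : e.head = u := by
      have := Finset.mem_Icc.mp hecov.2
      exact le_antisymm this.2 this.1
    refine ⟨e.tail, ⟨?_, ?_⟩, e, he, rfl, hhead⟩
    · by_contra htC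
      have hcovC : DCovers e C := ⟨htC, hhead ▸ huC⟩
      have hed : e = d := by
        by_contra hne'
        exact honly e he hne' hcovC
      exact hu (hed ▸ Relation.ReflTransGen.single ⟨e, he, hed ▸ rfl, hhead⟩)
    · intro hdesc'
      exact hu (hdesc'.tail ⟨e, he, rfl, hhead⟩)
  -- iterate the step to get an infinite ancestor chain
  let T := {u : Fin N // u ∈ C ∧ ¬ Descend F d.tail u}
  have hw0 : w ∈ C ∧ ¬ Descend F d.tail w := ⟨hmem, hdesc⟩
  let g : T → T := fun u =>
    ⟨(step u.1 u.2.1 u.2.2).choose, (step u.1 u.2.1 u.2.2).choose_spec.1⟩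
  have hg : ∀ u : T, ∃ e ∈ F, e.tail = (g u).1 ∧ e.head = u.1 :=
    fun u => (step u.1 u.2.1 u.2.2).choose_spec.2
  let xc : ℕ → T := fun i => g^[i] ⟨w, hw0⟩
  apply no_chain hF (fun i => (xc i).1)
  intro i
  have hstep : xc (i + 1) = g (xc i) := Function.iterate_succ_apply' g i _
  rw [hstep]
  exact hg (xc i)

/-- All vertices between `v` and a descendant of `v` are descendants of `v`. -/
private lemma desc_ival (hF : NonShortenable F) {v a : Fin N} (h : Descend F v a) :
    ∀ u : Fin N, min (v : ℕ) (a : ℕ) ≤ (u : ℕ) → (u : ℕ) ≤ max (v : ℕ) (a : ℕ) →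
      Descend F v u := by
  induction h with
  | refl =>
    intro u h1 h2
    have : u = v := Fin.ext (by omega)
    subst this
    exact Relation.ReflTransGen.refl
  | @tail b a hb harc ih =>
    intro u h1 h2
    by_cases hcase : min (v : ℕ) (b : ℕ) ≤ (u : ℕ) ∧ (u : ℕ) ≤ max (v : ℕ) (b : ℕ)
    · exact ih u hcase.1 hcase.2
    · push_neg at hcase
      obtain ⟨e, he, het, heh⟩ := harc
      have hbu : Descend F e.tail u := by
        refine desc_between hF he ?_ ?_
        · rw [Fin.le_def]
          rcases le_total e.tail e.head with hle | hle
          · rw [min_eq_left hle, congrArg Fin.val het]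
            rw [Fin.le_def, congrArg Fin.val het, congrArg Fin.val heh] at hle
            omega
          · rw [min_eq_right hle, congrArg Fin.val heh]
            rw [Fin.le_def, congrArg Fin.val het, congrArg Fin.val heh] at hle
            omega
        · rw [Fin.le_def]
          rcases le_total e.tail e.head with hle | hle
          · rw [max_eq_right hle, congrArg Fin.val heh]
            rw [Fin.le_def, congrArg Fin.val het, congrArg Fin.val heh] at hle
            omega
          · rw [max_eq_left hle, congrArg Fin.val het]
            rw [Fin.le_def, congrArg Fin.val het, congrArg Fin.val heh] at hle
            omega
      exact Relation.ReflTransGen.trans hb (het ▸ hbu)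

/-- Interval property for descendants. -/
private lemma desc_sandwich (hF : NonShortenable F) {v a b u : Fin N}
    (ha : Descend F v a) (hb : Descend F v b) (h1 : a ≤ u) (h2 : u ≤ b) :
    Descend F v u := by
  rw [Fin.le_def] at h1 h2
  rcases le_total (u : ℕ) (v : ℕ) with h | h
  · exact desc_ival hF ha u (by omega) (by omega)
  · exact desc_ival hF hb u (by omega) (by omega)

/-- Consecutive links of a festoon have overlapping or touching spans. -/
private lemma consec_lo_le_hi {p : ℕ} {f : Fin p → Link N} (hf : IsFestoonSeq f)
    (i j : Fin p) (hij : (i : ℕ) + 1 = (j : ℕ)) : (f j).lo ≤ (f i).hi := by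
  have hlt : i < j := by rw [Fin.lt_def]; omega
  obtain ⟨hlo, hhi⟩ := hf.1 i j hlt
  have hint := hf.2.1 i j hij
  have hi1 := (f i).lo_lt_hi
  have hi2 := (f j).lo_lt_hi
  rw [Fin.lt_def] at hlo hhi hi1 hi2
  rw [Fin.le_def]
  rcases hint with (h | h | h | h) | (⟨h1, h2, h3⟩ | ⟨h1, h2, h3⟩)
  · have := congrArg Fin.val h; omega
  · have := congrArg Fin.val h; omega
  · have := congrArg Fin.val h; omega
  · have := congrArg Fin.val h; omega
  · rw [Fin.lt_def] at h1 h2 h3; omega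
  · rw [Fin.lt_def] at h1 h2 h3; omega

/-- Every vertex of the festoon interval lies in the span of some link. -/
private lemma festoon_cover {X : Finset (Link N)} (hX : IsFestoon X) {u : Fin N}
    (hu : u ∈ festoonIval X) : ∃ ℓ ∈ X, ℓ.lo ≤ u ∧ u ≤ ℓ.hi := by
  classical
  obtain ⟨p, hp, f, hseq, rfl⟩ := hX
  obtain ⟨⟨ℓ1, h1, h1le⟩, ⟨ℓ2, h2, h2le⟩⟩ := hu
  set A := Finset.univ.filter (fun i : Fin p => (f i).lo ≤ u) with hA
  have hAne : A.Nonempty := by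
    obtain ⟨i, _, rfl⟩ := Finset.mem_image.mp h1
    exact ⟨i, Finset.mem_filter.mpr ⟨Finset.mem_univ _, h1le⟩⟩
  set k := A.max' hAne with hk
  have hklo : (f k).lo ≤ u := (Finset.mem_filter.mp (A.max'_mem hAne)).2
  by_cases hku : u ≤ (f k).hi
  · exact ⟨f k, Finset.mem_image.mpr ⟨k, Finset.mem_univ _, rfl⟩, hklo, hku⟩
  exfalso
  push_neg at hku
  by_cases hlast : (k : ℕ) + 1 < p
  · set k' : Fin p := ⟨(k : ℕ) + 1, hlast⟩ with hk'
    have hle := consec_lo_le_hi hseq k k' rfl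
    have hk'A : k' ∈ A :=
      Finset.mem_filter.mpr ⟨Finset.mem_univ _, le_of_lt (lt_of_le_of_lt hle hku)⟩
    have := Fin.le_def.mp (Finset.le_max' A k' hk'A)
    simp only [hk'] at this
    omega
  · obtain ⟨j, _, rfl⟩ := Finset.mem_image.mp h2
    have hjk : (j : ℕ) ≤ (k : ℕ) := by
      have := j.isLt
      omega
    rcases Nat.eq_or_lt_of_le hjk with h | h
    · have : j = k := Fin.ext h
      subst this
      exact absurd h2le (not_le.mpr hku)
    · have := (hseq.1 j k (Fin.lt_def.mpr h)).2
      exact absurd (lt_of_le_of_lt h2le this) (not_lt.mpr (le_of_lt hku))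

end AuxWRAP

/-- for a non-shortenable directed WRAP solution `F`, a
vertex `v ≠ r`, and a festoon `X ⊆ L`, the festoon `X` contains a link
incident to a `v`-good vertex iff the festoon interval `I_X` contains a
`v`-good vertex. -/
theorem vgood_in_interval_iff {n : ℕ}
    (L : Finset (Link (n + 3))) (c : Link (n + 3) → ℝ)
    (F : Finset (DLink (n + 3))) (hF : NonShortenable F)
    (v : Fin (n + 3)) (hv : v ≠ 0)
    (X : Finset (Link (n + 3))) (hXL : X ⊆ L) (hX : IsFestoon X) :
    (∃ ℓ ∈ X, ∃ u : Fin (n + 3), Link.Incident ℓ u ∧ VGood F v u) ↔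
      ∃ u ∈ festoonIval X, VGood F v u := by
  constructor
  · rintro ⟨ℓ, hℓ, u, hinc, hgood⟩
    refine ⟨u, ⟨⟨ℓ, hℓ, ?_⟩, ⟨ℓ, hℓ, ?_⟩⟩, hgood⟩
    · rcases hinc with h | h
      · exact le_of_eq h
      · exact h ▸ le_of_lt ℓ.lo_lt_hi
    · rcases hinc with h | h
      · exact h ▸ le_of_lt ℓ.lo_lt_hi
      · exact le_of_eq h.symm
  · rintro ⟨u, hu, hgood⟩
    obtain ⟨ℓ, hℓ, hlo, hhi⟩ := festoon_cover hX hu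
    by_cases hgl : VGood F v ℓ.lo
    · exact ⟨ℓ, hℓ, ℓ.lo, Or.inl rfl, hgl⟩
    by_cases hgh : VGood F v ℓ.hi
    · exact ⟨ℓ, hℓ, ℓ.hi, Or.inr rfl, hgh⟩
    exfalso
    rw [VGood, not_not] at hgl hgh
    exact hgood (desc_sandwich hF hgl hgh hlo hhi)
end
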